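/- arXiv:1207.6659 — 4 statements merged into one kernel-verified Lean document; each statement's English description precedes it below -/
import Mathlib

section
/- The two-dimensional product rule: if R = R₁ × R₂ and R' = R₁' × R₂' are dyadic rectangles in [0,1)² with |R| = |R'|, R ≠ R', and R ∩ R' ≠ ∅, then |R₁| ≠ |R₁'| and |R₂| ≠ |R₂'|, and h_R · h_{R'} = ± h_{R ∩ R'}, where R ∩ R' is again a dyadic rectangle. -/
open MeasureTheory Finset

noncomputable section

/-- The dyadic interval `[k/2^m, (k+1)/2^m)`. -/
def dyadI (m k : ℕ) : Set ℝ := Set.Ico ((k : ℝ) / 2 ^ m) (((k : ℝ) + 1) / 2 ^ m)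

/-- The `L^∞`-normalized Haar function of the dyadic interval `dyadI m k`:
`-1` on the left half, `+1` on the right half, `0` elsewhere. -/
def haar (m k : ℕ) : ℝ → ℝ :=
  (dyadI (m + 1) (2 * k + 1)).indicator (fun _ => (1 : ℝ))
    - (dyadI (m + 1) (2 * k)).indicator (fun _ => (1 : ℝ))

/-- The Haar function of the dyadic box with side lengths `2^{-r i}` and positions `k i`. -/
def haarBox {d : ℕ} (r k : Fin d → ℕ) : (Fin d → ℝ) → ℝ :=
  fun x => ∏ i, haar (r i) (k i) (x i)

/-- The unit cube `[0,1)^d`. -/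
def unitCube (d : ℕ) : Set (Fin d → ℝ) := Set.univ.pi fun _ => Set.Ico (0 : ℝ) 1

/-- Index set for positions of dyadic boxes of level vector `r`. -/
def boxIdx (d : ℕ) (r : Fin d → ℕ) : Finset (Fin d → ℕ) :=
  Fintype.piFinset fun i => Finset.range (2 ^ r i)

/-- The level vectors `r ∈ ℕ^d` with `|r| = r₁ + ⋯ + r_d = n`. -/
def levIdx (d n : ℕ) : Finset (Fin d → ℕ) :=
  (Fintype.piFinset fun _ : Fin d => Finset.range (n + 1)).filter fun r => ∑ i, r i = n

lemma dyadI_nonneg {m k : ℕ} {x : ℝ} (h : x ∈ dyadI m k) : 0 ≤ x :=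
  le_trans (by positivity) h.1

lemma mem_dyadI_iff {m k : ℕ} {x : ℝ} (hx : 0 ≤ x) :
    x ∈ dyadI m k ↔ ⌊x * 2 ^ m⌋₊ = k := by
  have h2 : (0:ℝ) < 2 ^ m := by positivity
  rw [dyadI, Set.mem_Ico, Nat.floor_eq_iff (by positivity), div_le_iff₀ h2, lt_div_iff₀ h2]

lemma dyadI_nonempty (m k : ℕ) : (dyadI m k).Nonempty := by
  refine Set.nonempty_Ico.mpr ?_
  have h2 : (0:ℝ) < 2 ^ m := by positivity
  rw [div_lt_div_iff₀ h2 h2]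
  nlinarith

lemma floor_of_mem {m d k' : ℕ} {x : ℝ} (h : x ∈ dyadI (m + d) k') :
    ⌊x * 2 ^ m⌋₊ = k' / 2 ^ d := by
  have hx : 0 ≤ x := dyadI_nonneg h
  have hk : ⌊x * 2 ^ (m + d)⌋₊ = k' := (mem_dyadI_iff hx).mp h
  have he : x * 2 ^ m = (x * 2 ^ (m + d)) / (2 ^ d : ℕ) := by
    push_cast; field_simp; ring
  rw [he, Nat.floor_div_natCast, hk]

lemma dyadI_eq_of_mem {m k k' : ℕ} {x : ℝ} (h : x ∈ dyadI m k) (h' : x ∈ dyadI m k') :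
    k = k' := by
  have hx := dyadI_nonneg h
  rw [← (mem_dyadI_iff hx).mp h, (mem_dyadI_iff hx).mp h']

lemma dyadI_subset_of_inter {m m' k k' : ℕ} (hle : m ≤ m')
    (h : (dyadI m k ∩ dyadI m' k').Nonempty) : dyadI m' k' ⊆ dyadI m k := by
  obtain ⟨d, rfl⟩ : ∃ d, m' = m + d := ⟨m' - m, by omega⟩
  obtain ⟨x, hx, hx'⟩ := h
  have hk : k = k' / 2 ^ d := by
    rw [← (mem_dyadI_iff (dyadI_nonneg hx)).mp hx, floor_of_mem hx']
  intro y hy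
  rw [mem_dyadI_iff (dyadI_nonneg hy), floor_of_mem hy, hk]

lemma mem_half {m k : ℕ} {x : ℝ} (h : x ∈ dyadI m k) :
    x ∈ dyadI (m + 1) (2 * k) ∨ x ∈ dyadI (m + 1) (2 * k + 1) := by
  have hx : 0 ≤ x := dyadI_nonneg h
  set j := ⌊x * 2 ^ (m + 1)⌋₊ with hj
  have he : x * 2 ^ m = (x * 2 ^ (m + 1)) / (2 : ℕ) := by push_cast; ring
  have hk : j / 2 = k := by
    rw [← (mem_dyadI_iff hx).mp h, he, Nat.floor_div_natCast]
  have : j = 2 * k ∨ j = 2 * k + 1 := by omega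
  rcases this with hc | hc
  · exact Or.inl ((mem_dyadI_iff hx).mpr hc)
  · exact Or.inr ((mem_dyadI_iff hx).mpr hc)

lemma half_subset_left (m k : ℕ) : dyadI (m + 1) (2 * k) ⊆ dyadI m k := by
  intro y hy
  rw [mem_dyadI_iff (dyadI_nonneg hy), floor_of_mem (d := 1) hy]
  omega

lemma half_subset_right (m k : ℕ) : dyadI (m + 1) (2 * k + 1) ⊆ dyadI m k := by
  intro y hy
  rw [mem_dyadI_iff (dyadI_nonneg hy), floor_of_mem (d := 1) hy]
  omega

lemma haar_left {m k : ℕ} {x : ℝ} (h : x ∈ dyadI (m + 1) (2 * k)) : haar m k x = -1 := by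
  have hn : x ∉ dyadI (m + 1) (2 * k + 1) := fun h' => by
    have := dyadI_eq_of_mem h h'; omega
  simp [haar, Set.indicator_of_mem h, Set.indicator_of_notMem hn]

lemma haar_right {m k : ℕ} {x : ℝ} (h : x ∈ dyadI (m + 1) (2 * k + 1)) : haar m k x = 1 := by
  have hn : x ∉ dyadI (m + 1) (2 * k) := fun h' => by
    have := dyadI_eq_of_mem h h'; omega
  simp [haar, Set.indicator_of_mem h, Set.indicator_of_notMem hn]

lemma haar_zero {m k : ℕ} {x : ℝ} (h : x ∉ dyadI m k) : haar m k x = 0 := by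
  have h1 : x ∉ dyadI (m + 1) (2 * k) := fun h' => h (half_subset_left m k h')
  have h2 : x ∉ dyadI (m + 1) (2 * k + 1) := fun h' => h (half_subset_right m k h')
  simp [haar, Set.indicator_of_notMem h1, Set.indicator_of_notMem h2]

lemma haar_mul_of_lt {m m' k k' : ℕ} (hlt : m < m')
    (hint : (dyadI m k ∩ dyadI m' k').Nonempty) :
    dyadI m' k' ⊆ dyadI m k ∧
    ∃ ε : ℝ, (ε = 1 ∨ ε = -1) ∧ ∀ x, haar m k x * haar m' k' x = ε * haar m' k' x := by
  have hsub := dyadI_subset_of_inter (le_of_lt hlt) hint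
  obtain ⟨y, hy⟩ := dyadI_nonempty m' k'
  refine ⟨hsub, ?_⟩
  rcases mem_half (hsub hy) with hL | hR
  · have hsub2 : dyadI m' k' ⊆ dyadI (m + 1) (2 * k) :=
      dyadI_subset_of_inter (by omega) ⟨y, hL, hy⟩
    refine ⟨-1, Or.inr rfl, fun x => ?_⟩
    by_cases hx : x ∈ dyadI m' k'
    · rw [haar_left (hsub2 hx)]
    · rw [haar_zero hx]; ring
  · have hsub2 : dyadI m' k' ⊆ dyadI (m + 1) (2 * k + 1) :=
      dyadI_subset_of_inter (by omega) ⟨y, hR, hy⟩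
    refine ⟨1, Or.inl rfl, fun x => ?_⟩
    by_cases hx : x ∈ dyadI m' k'
    · rw [haar_right (hsub2 hx)]
    · rw [haar_zero hx]; ring


/-- The two-dimensional product rule: if `R = R₁ × R₂` and `R' = R₁' × R₂'` are dyadic
rectangles in `[0,1)²` of the same area which are distinct and not disjoint, then
`|R₁| ≠ |R₁'|`, `|R₂| ≠ |R₂'|`, the intersection `R ∩ R'` is a dyadic rectangle, and
`h_R · h_{R'} = ± h_{R ∩ R'}`. -/
theorem stmt_2 (m1 k1 m2 k2 m1' k1' m2' k2' : ℕ)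
    (h1 : k1 < 2 ^ m1) (h2 : k2 < 2 ^ m2) (h1' : k1' < 2 ^ m1') (h2' : k2' < 2 ^ m2')
    (hvol : m1 + m2 = m1' + m2')
    (hne : dyadI m1 k1 ×ˢ dyadI m2 k2 ≠ dyadI m1' k1' ×ˢ dyadI m2' k2')
    (hint : ((dyadI m1 k1 ×ˢ dyadI m2 k2) ∩ (dyadI m1' k1' ×ˢ dyadI m2' k2')).Nonempty) :
    m1 ≠ m1' ∧ m2 ≠ m2' ∧
    ∃ n1 j1 n2 j2 : ℕ, j1 < 2 ^ n1 ∧ j2 < 2 ^ n2 ∧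
      (dyadI m1 k1 ×ˢ dyadI m2 k2) ∩ (dyadI m1' k1' ×ˢ dyadI m2' k2')
        = dyadI n1 j1 ×ˢ dyadI n2 j2 ∧
      ∃ ε : ℝ, (ε = 1 ∨ ε = -1) ∧
        ∀ x : ℝ × ℝ, (haar m1 k1 x.1 * haar m2 k2 x.2) * (haar m1' k1' x.1 * haar m2' k2' x.2)
          = ε * (haar n1 j1 x.1 * haar n2 j2 x.2) := by
  obtain ⟨⟨x1, x2⟩, ⟨hx1, hx2⟩, hx1', hx2'⟩ := hint
  have hintA : (dyadI m1 k1 ∩ dyadI m1' k1').Nonempty := ⟨x1, hx1, hx1'⟩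
  have hintB : (dyadI m2 k2 ∩ dyadI m2' k2').Nonempty := ⟨x2, hx2, hx2'⟩
  have hm1 : m1 ≠ m1' := by
    intro h
    subst h
    have hm2 : m2 = m2' := by omega
    subst hm2
    have e1 := dyadI_eq_of_mem hx1 hx1'
    have e2 := dyadI_eq_of_mem hx2 hx2'
    subst e1; subst e2
    exact hne rfl
  have hm2 : m2 ≠ m2' := by omega
  refine ⟨hm1, hm2, ?_⟩
  rcases lt_or_gt_of_ne hm1 with hlt | hgt
  · -- m1 < m1', m2' < m2
    obtain ⟨hsub1, ε1, hε1, hprod1⟩ := haar_mul_of_lt hlt hintA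
    obtain ⟨hsub2, ε2, hε2, hprod2⟩ :=
      haar_mul_of_lt (show m2' < m2 by omega) ⟨x2, hx2', hx2⟩
    refine ⟨m1', k1', m2, k2, h1', h2, ?_, ε1 * ε2, ?_, fun x => ?_⟩
    · rw [Set.prod_inter_prod, Set.inter_eq_self_of_subset_right hsub1,
        Set.inter_eq_self_of_subset_left hsub2]
    · rcases hε1 with rfl | rfl <;> rcases hε2 with rfl | rfl <;> norm_num
    · have e1 := hprod1 x.1
      have e2 := hprod2 x.2
      linear_combination (haar m2 k2 x.2 * haar m2' k2' x.2) * e1 +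
        (ε1 * haar m1' k1' x.1) * e2
  · -- m1' < m1, m2 < m2'
    obtain ⟨hsub1, ε1, hε1, hprod1⟩ := haar_mul_of_lt hgt ⟨x1, hx1', hx1⟩
    obtain ⟨hsub2, ε2, hε2, hprod2⟩ :=
      haar_mul_of_lt (show m2 < m2' by omega) hintB
    refine ⟨m1, k1, m2', k2', h1, h2', ?_, ε1 * ε2, ?_, fun x => ?_⟩
    · rw [Set.prod_inter_prod, Set.inter_eq_self_of_subset_left hsub1,
        Set.inter_eq_self_of_subset_right hsub2]
    · rcases hε1 with rfl | rfl <;> rcases hε2 with rfl | rfl <;> norm_num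
    · have e1 := hprod1 x.1
      have e2 := hprod2 x.2
      linear_combination (haar m2 k2 x.2 * haar m2' k2' x.2) * e1 +
        (ε1 * haar m1 k1 x.1) * e2
end
end

section
/- Roth-type duality argument: let D : [0,1]^d → ℝ be integrable and suppose that for every r ∈ ℕ^d with |r| = n there exists an r-function f_r with ⟨D, f_r⟩ ≥ c > 0. Then ‖D‖₂ ≥ c · (#{r : |r| = n})^{1/2} ≳_d c · n^{(d-1)/2}. -/
open MeasureTheory Finset

noncomputable section

lemma dyadI_meas (m k : ℕ) : MeasurableSet (dyadI m k) := measurableSet_Ico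
lemma volume_dyadI (m k : ℕ) : volume (dyadI m k) = ENNReal.ofReal ((2 ^ m : ℝ)⁻¹) := by
  rw [dyadI, Real.volume_Ico]
  congr 1
  field_simp; ring
lemma dyadI_disjoint' {m k l : ℕ} (h : k ≠ l) {x : ℝ} (hk : x ∈ dyadI m k) : x ∉ dyadI m l := by
  rcases hk with ⟨hk1, hk2⟩
  rintro ⟨hl1, hl2⟩
  have h2 : (0:ℝ) < 2 ^ m := by positivity
  rcases h.lt_or_gt with h | h
  · have h' : (k:ℝ) + 1 ≤ l := by exact_mod_cast h
    have : ((k:ℝ) + 1) / 2 ^ m ≤ (l:ℝ) / 2 ^ m := by gcongr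
    linarith
  · have h' : (l:ℝ) + 1 ≤ k := by exact_mod_cast h
    have : ((l:ℝ) + 1) / 2 ^ m ≤ (k:ℝ) / 2 ^ m := by gcongr
    linarith
lemma dyadI_subset {a b : ℕ} (hab : a ≤ b) (j : ℕ) : dyadI b j ⊆ dyadI a (j / 2 ^ (b - a)) := by
  intro x hx
  rcases hx with ⟨h1, h2⟩
  set c := 2 ^ (b - a) with hc
  have hcpos : 0 < c := Nat.pow_pos (by norm_num)
  have hb : (2:ℝ) ^ b = 2 ^ a * (c:ℝ) := by
    rw [hc]; push_cast; rw [← pow_add]; congr 1; omega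
  have h2a : (0:ℝ) < 2 ^ a := by positivity
  have h2b : (0:ℝ) < 2 ^ b := by positivity
  have e1 : ((j / c : ℕ) : ℝ) / 2 ^ a = ((j / c : ℕ) : ℝ) * c / 2 ^ b := by
    rw [hb]; field_simp
  have e2 : (((j / c : ℕ) : ℝ) + 1) / 2 ^ a = (((j / c : ℕ) : ℝ) + 1) * c / 2 ^ b := by
    rw [hb]; field_simp
  constructor
  · rw [e1]
    refine le_trans ?_ h1
    gcongr
    exact_mod_cast Nat.div_mul_le_self j c
  · rw [e2]
    refine lt_of_lt_of_le h2 ?_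
    gcongr
    have hmod := Nat.div_add_mod j c
    have hlt : j % c < c := Nat.mod_lt _ hcpos
    have : j + 1 ≤ (j / c + 1) * c := by nlinarith [hmod, hlt]
    exact_mod_cast this
lemma haar_measurable (m k : ℕ) : Measurable (haar m k) := by
  apply Measurable.sub <;> exact (measurable_const.indicator (dyadI_meas _ _))
lemma abs_haar_le_one (m k : ℕ) (x : ℝ) : |haar m k x| ≤ 1 := by
  simp only [haar, Pi.sub_apply]
  by_cases h1 : x ∈ dyadI (m + 1) (2 * k + 1) <;>
    by_cases h2 : x ∈ dyadI (m + 1) (2 * k) <;>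
      simp [Set.indicator_of_mem, Set.indicator_of_notMem, h1, h2]
lemma haar_support {m k : ℕ} {x : ℝ} (hx : x ∉ dyadI m k) : haar m k x = 0 := by
  have h1 : dyadI (m + 1) (2 * k + 1) ⊆ dyadI m k := by
    have e : m + 1 - m = 1 := by omega
    have := dyadI_subset (a := m) (b := m + 1) (Nat.le_succ m) (2 * k + 1)
    simpa [e, Nat.mul_add_div] using this
  have h0 : dyadI (m + 1) (2 * k) ⊆ dyadI m k := by
    have e : m + 1 - m = 1 := by omega
    have := dyadI_subset (a := m) (b := m + 1) (Nat.le_succ m) (2 * k)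
    simpa [e, Nat.mul_div_cancel_left] using this
  simp only [haar, Pi.sub_apply]
  rw [Set.indicator_of_notMem (fun h => hx (h1 h)), Set.indicator_of_notMem (fun h => hx (h0 h))]
  ring
lemma haar_const_on {a b k i : ℕ} (hab : a + 1 ≤ b) :
    ∃ c : ℝ, ∀ x ∈ dyadI b i, haar a k x = c := by
  have key : ∀ j : ℕ, ∀ x ∈ dyadI b i,
      (dyadI (a + 1) j).indicator (fun _ => (1:ℝ)) x
        = if j = i / 2 ^ (b - (a + 1)) then 1 else 0 := by
    intro j x hx
    by_cases h : j = i / 2 ^ (b - (a + 1))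
    · subst h
      rw [Set.indicator_of_mem (dyadI_subset hab i hx), if_pos rfl]
    · rw [Set.indicator_of_notMem, if_neg h]
      intro hmem
      exact dyadI_disjoint' (Ne.symm h) (dyadI_subset hab i hx) hmem
  refine ⟨(if 2 * k + 1 = i / 2 ^ (b - (a + 1)) then (1:ℝ) else 0)
    - (if 2 * k = i / 2 ^ (b - (a + 1)) then (1:ℝ) else 0), fun x hx => ?_⟩
  simp only [haar, Pi.sub_apply]
  rw [key _ x hx, key _ x hx]
lemma integrable_indicator_bdd {f : ℝ → ℝ} (hf : Measurable f) (hb : ∀ x, |f x| ≤ 1)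
    {S : Set ℝ} (hS : MeasurableSet S) (hfin : volume S < ⊤) :
    Integrable (S.indicator f) := by
  have hind : Integrable (S.indicator (fun _ => (1:ℝ))) := by
    rw [integrable_indicator_iff hS]
    exact integrableOn_const hfin.ne
  refine hind.mono' ((hf.indicator hS).aestronglyMeasurable) ?_
  filter_upwards with x
  by_cases hx : x ∈ S
  · simp [Set.indicator_of_mem hx, hb x, abs_of_nonneg, Real.norm_eq_abs, hb]
  · simp [Set.indicator_of_notMem hx]
lemma integral_mul_indicator_of_const {f : ℝ → ℝ} (hf : Measurable f) (hb : ∀ x, |f x| ≤ 1)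
    {S : Set ℝ} (hS : MeasurableSet S) (hfin : volume S < ⊤) {c : ℝ}
    (hc : ∀ x ∈ S, f x = c) :
    ∫ x, f x * S.indicator (fun _ => (1:ℝ)) x = c * (volume S).toReal := by
  have h1 : ∀ x, f x * S.indicator (fun _ => (1:ℝ)) x = S.indicator f x := by
    intro x
    by_cases hx : x ∈ S <;> simp [Set.indicator_of_mem, Set.indicator_of_notMem, hx]
  simp_rw [h1]
  rw [integral_indicator hS]
  rw [setIntegral_congr_fun hS hc, setIntegral_const]
  simp [mul_comm, measureReal_def]
lemma dyadI_half_subset_left (b l : ℕ) : dyadI (b + 1) (2 * l) ⊆ dyadI b l := by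
  have e : b + 1 - b = 1 := by omega
  have := dyadI_subset (a := b) (b := b + 1) (Nat.le_succ b) (2 * l)
  simpa [e, Nat.mul_div_cancel_left] using this
lemma dyadI_half_subset_right (b l : ℕ) : dyadI (b + 1) (2 * l + 1) ⊆ dyadI b l := by
  have e : b + 1 - b = 1 := by omega
  have := dyadI_subset (a := b) (b := b + 1) (Nat.le_succ b) (2 * l + 1)
  simpa [e, Nat.mul_add_div] using this
lemma volume_dyadI_lt_top (m k : ℕ) : volume (dyadI m k) < ⊤ := by
  rw [volume_dyadI]; exact ENNReal.ofReal_lt_top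
lemma integral_haar_mul_lt {a b : ℕ} (h : a < b) (k l : ℕ) :
    ∫ x, haar a k x * haar b l x = 0 := by
  obtain ⟨c, hc⟩ := haar_const_on (a := a) (b := b) (k := k) (i := l) h
  have hc1 : ∀ x ∈ dyadI (b + 1) (2 * l + 1), haar a k x = c :=
    fun x hx => hc x (dyadI_half_subset_right b l hx)
  have hc0 : ∀ x ∈ dyadI (b + 1) (2 * l), haar a k x = c :=
    fun x hx => hc x (dyadI_half_subset_left b l hx)
  have hint : ∀ j : ℕ, Integrable (fun x => haar a k x *
      (dyadI (b + 1) j).indicator (fun _ => (1:ℝ)) x) := by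
    intro j
    have : (fun x => haar a k x * (dyadI (b + 1) j).indicator (fun _ => (1:ℝ)) x)
        = (dyadI (b + 1) j).indicator (haar a k) := by
      funext x
      by_cases hx : x ∈ dyadI (b + 1) j <;>
        simp [Set.indicator_of_mem, Set.indicator_of_notMem, hx]
    rw [this]
    exact integrable_indicator_bdd (haar_measurable a k) (abs_haar_le_one a k)
      (dyadI_meas _ _) (volume_dyadI_lt_top _ _)
  have expand : ∀ x : ℝ, haar a k x * haar b l x
      = haar a k x * (dyadI (b + 1) (2 * l + 1)).indicator (fun _ => (1:ℝ)) x
        - haar a k x * (dyadI (b + 1) (2 * l)).indicator (fun _ => (1:ℝ)) x := by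
    intro x
    simp only [haar, Pi.sub_apply]
    ring
  simp_rw [expand]
  rw [integral_sub (hint _) (hint _),
    integral_mul_indicator_of_const (haar_measurable a k) (abs_haar_le_one a k)
      (dyadI_meas _ _) (volume_dyadI_lt_top _ _) hc1,
    integral_mul_indicator_of_const (haar_measurable a k) (abs_haar_le_one a k)
      (dyadI_meas _ _) (volume_dyadI_lt_top _ _) hc0]
  rw [volume_dyadI, volume_dyadI]
  ring
lemma integral_haar_mul_self (a k : ℕ) :
    ∫ x, haar a k x * haar a k x = ((2:ℝ) ^ a)⁻¹ := by
  have expand : ∀ x : ℝ, haar a k x * haar a k x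
      = (dyadI (a + 1) (2 * k + 1)).indicator (fun _ => (1:ℝ)) x
        + (dyadI (a + 1) (2 * k)).indicator (fun _ => (1:ℝ)) x := by
    intro x
    simp only [haar, Pi.sub_apply]
    by_cases h1 : x ∈ dyadI (a + 1) (2 * k + 1) <;>
      by_cases h2 : x ∈ dyadI (a + 1) (2 * k)
    · exact absurd h2 (dyadI_disjoint' (by omega) h1)
    all_goals simp [Set.indicator_of_mem, Set.indicator_of_notMem, h1, h2]
  have hint : ∀ j : ℕ, Integrable ((dyadI (a + 1) j).indicator (fun _ => (1:ℝ))) := by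
    intro j
    rw [integrable_indicator_iff (dyadI_meas _ _)]
    exact integrableOn_const (volume_dyadI_lt_top _ _).ne
  simp_rw [expand]
  rw [integral_add (hint _) (hint _), integral_indicator_const _ (dyadI_meas _ _),
    integral_indicator_const _ (dyadI_meas _ _), measureReal_def, measureReal_def, volume_dyadI, volume_dyadI]
  rw [ENNReal.toReal_ofReal (by positivity)]
  rw [pow_succ]
  simp
  ring
lemma integral_haar_mul_ne {k l : ℕ} (a : ℕ) (h : k ≠ l) :
    ∫ x, haar a k x * haar a l x = 0 := by
  have : ∀ x : ℝ, haar a k x * haar a l x = 0 := by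
    intro x
    by_cases hx : x ∈ dyadI a k
    · rw [haar_support (dyadI_disjoint' h hx), mul_zero]
    · rw [haar_support hx, zero_mul]
  simp_rw [this, integral_zero]
lemma integral_haar_mul (a b k l : ℕ) :
    ∫ x, haar a k x * haar b l x = if a = b ∧ k = l then ((2:ℝ) ^ a)⁻¹ else 0 := by
  rcases lt_trichotomy a b with h | rfl | h
  · rw [integral_haar_mul_lt h, if_neg (fun hh => by omega)]
  · by_cases hkl : k = l
    · subst hkl; rw [integral_haar_mul_self, if_pos ⟨rfl, rfl⟩]
    · rw [integral_haar_mul_ne a hkl, if_neg (by tauto)]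
  · have := integral_haar_mul_lt h l k
    simp_rw [mul_comm] at this
    rw [this, if_neg (fun hh => by omega)]
variable {d : ℕ}
lemma unitCube_meas : MeasurableSet (unitCube d) :=
  MeasurableSet.univ_pi fun _ => measurableSet_Ico
lemma volume_unitCube : volume (unitCube d) = 1 := by
  rw [unitCube, volume_pi_pi]
  simp
lemma haarBox_measurable (r k : Fin d → ℕ) : Measurable (haarBox r k) :=
  Finset.measurable_prod _ fun i _ => (haar_measurable _ _).comp (measurable_pi_apply i)
lemma abs_haarBox_le_one (r k : Fin d → ℕ) (x : Fin d → ℝ) : |haarBox r k x| ≤ 1 := by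
  rw [haarBox, Finset.abs_prod]
  exact Finset.prod_le_one (fun i _ => abs_nonneg _) (fun i _ => abs_haar_le_one _ _ _)
lemma dyadI_subset_unit {m k : ℕ} (h : k < 2 ^ m) : dyadI m k ⊆ Set.Ico (0:ℝ) 1 := by
  intro x ⟨h1, h2⟩
  have h2m : (0:ℝ) < 2 ^ m := by positivity
  constructor
  · exact le_trans (by positivity) h1
  · refine lt_of_lt_of_le h2 ?_
    rw [div_le_one h2m]
    exact_mod_cast Nat.succ_le_of_lt h
lemma haarBox_zero_of_not_cube {r k : Fin d → ℕ} (hk : k ∈ boxIdx d r)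
    {x : Fin d → ℝ} (hx : x ∉ unitCube d) : haarBox r k x = 0 := by
  rw [unitCube, Set.mem_pi] at hx
  push_neg at hx
  obtain ⟨i, -, hi⟩ := hx
  refine Finset.prod_eq_zero (Finset.mem_univ i) ?_
  apply haar_support
  intro hmem
  rw [boxIdx, Fintype.mem_piFinset] at hk
  exact hi (dyadI_subset_unit (Finset.mem_range.1 (hk i)) hmem)
lemma setIntegral_haarBox_mul {r s k l : Fin d → ℕ} (hk : k ∈ boxIdx d r) :
    ∫ x in unitCube d, haarBox r k x * haarBox s l x
      = ∏ i, ∫ t : ℝ, haar (r i) (k i) t * haar (s i) (l i) t := by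
  rw [setIntegral_eq_integral_of_forall_compl_eq_zero
    (fun x hx => by rw [haarBox_zero_of_not_cube hk hx, zero_mul])]
  have : ∀ x : Fin d → ℝ, haarBox r k x * haarBox s l x
      = ∏ i, (haar (r i) (k i) (x i) * haar (s i) (l i) (x i)) := by
    intro x
    rw [haarBox, haarBox, Finset.prod_mul_distrib]
  simp_rw [this]
  exact MeasureTheory.integral_fintype_prod_eq_prod
    (fun i t => haar (r i) (k i) t * haar (s i) (l i) t)
lemma card_boxIdx (r : Fin d → ℕ) : (boxIdx d r).card = 2 ^ (∑ i, r i) := by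
  rw [boxIdx, Fintype.card_piFinset]
  simp only [Finset.card_range]
  rw [Finset.prod_pow_eq_pow_sum]
lemma integral_haarBox_sq {r k : Fin d → ℕ} (hk : k ∈ boxIdx d r) :
    ∫ x in unitCube d, haarBox r k x * haarBox r k x = ((2:ℝ) ^ (∑ i, r i))⁻¹ := by
  rw [setIntegral_haarBox_mul hk]
  have : ∀ i : Fin d, ∫ t : ℝ, haar (r i) (k i) t * haar (r i) (k i) t
      = ((2:ℝ) ^ (r i))⁻¹ := fun i => integral_haar_mul_self _ _
  rw [Finset.prod_congr rfl (fun i _ => this i), ← Finset.prod_pow_eq_pow_sum]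
  rw [← Finset.prod_inv_distrib]
lemma integral_haarBox_mul_eq_zero {r s k l : Fin d → ℕ} (hk : k ∈ boxIdx d r)
    (h : r ≠ s ∨ k ≠ l) : ∫ x in unitCube d, haarBox r k x * haarBox s l x = 0 := by
  rw [setIntegral_haarBox_mul hk]
  have : ∃ i : Fin d, ¬(r i = s i ∧ k i = l i) := by
    by_contra hcon
    push_neg at hcon
    rcases h with h | h
    · exact h (funext fun i => (hcon i).1)
    · exact h (funext fun i => (hcon i).2)
  obtain ⟨i, hi⟩ := this
  refine Finset.prod_eq_zero (Finset.mem_univ i) ?_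
  rw [integral_haar_mul, if_neg hi]
lemma integrableOn_cube_of_bdd {f : (Fin d → ℝ) → ℝ} (hf : Measurable f) (C : ℝ)
    (hb : ∀ x, |f x| ≤ C) : IntegrableOn f (unitCube d) := by
  have hfin : IsFiniteMeasure (volume.restrict (unitCube d)) := by
    constructor
    rw [Measure.restrict_apply_univ, volume_unitCube]
    exact ENNReal.one_lt_top
  exact (integrable_const C).mono' hf.aestronglyMeasurable
    (Filter.Eventually.of_forall fun x => hb x)
lemma levIdx_card_lb {e n : ℕ} (he : 1 ≤ e) : (n / e + 1) ^ e ≤ (levIdx (e + 1) n).card := by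
  classical
  have hcard : (Fintype.piFinset fun _ : Fin e => Finset.range (n / e + 1)).card
      = (n / e + 1) ^ e := by
    rw [Fintype.card_piFinset]
    simp
  rw [← hcard]
  apply Finset.card_le_card_of_injOn (fun g : Fin e → ℕ => (Fin.snoc g (n - ∑ i, g i) : Fin (e + 1) → ℕ))
  · intro g hg
    rw [Finset.mem_coe, Fintype.mem_piFinset] at hg
    have hgle : ∀ i, g i ≤ n / e := fun i => Nat.lt_succ_iff.1 (Finset.mem_range.1 (hg i))
    have hsum : ∑ i, g i ≤ n := by
      calc ∑ i, g i ≤ ∑ _i : Fin e, n / e := Finset.sum_le_sum fun i _ => hgle i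
        _ = e * (n / e) := by rw [Finset.sum_const]; simp [mul_comm]
        _ ≤ n := Nat.mul_div_le n e
    rw [Finset.mem_coe, levIdx, Finset.mem_filter]
    beta_reduce
    constructor
    · rw [Fintype.mem_piFinset]
      intro i
      rw [Finset.mem_range, Nat.lt_succ_iff]
      induction i using Fin.lastCases with
      | last => rw [Fin.snoc_last]; omega
      | cast i => rw [Fin.snoc_castSucc]; exact le_trans (hgle i) (Nat.div_le_self n e)
    · rw [Fin.sum_univ_castSucc]
      simp only [Fin.snoc_castSucc, Fin.snoc_last]
      omega
  · intro g _ g' _ hgg'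
    have := congrArg Fin.init hgg'
    rwa [Fin.init_snoc, Fin.init_snoc] at this

/-- Roth-type duality: if `D` is integrable on `[0,1]^d` and for every `r` with `|r| = n`
there is an `r`-function `f_r` with `⟨D, f_r⟩ ≥ c > 0`, then
`‖D‖₂ ≥ c (#{r : |r| = n})^{1/2} ≥ c·C_d·n^{(d-1)/2}`. -/
theorem stmt_11 (d : ℕ) (hd : 2 ≤ d) :
    ∃ C : ℝ, 0 < C ∧ ∀ n : ℕ, 1 ≤ n → ∀ (c : ℝ), 0 < c →
      ∀ D : (Fin d → ℝ) → ℝ, IntegrableOn D (unitCube d) →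
        IntegrableOn (fun x => (D x) ^ 2) (unitCube d) →
        (∀ r ∈ levIdx d n, ∃ ε : (Fin d → ℕ) → ℝ,
          (∀ k ∈ boxIdx d r, ε k = 1 ∨ ε k = -1) ∧
          c ≤ ∫ x in unitCube d, D x * ∑ k ∈ boxIdx d r, ε k * haarBox r k x) →
        c * Real.sqrt ((levIdx d n).card) ≤ Real.sqrt (∫ x in unitCube d, (D x) ^ 2) ∧
        c * C * (n : ℝ) ^ (((d : ℝ) - 1) / 2)
          ≤ Real.sqrt (∫ x in unitCube d, (D x) ^ 2) := by
  obtain ⟨e, rfl⟩ : ∃ e, d = e + 1 := ⟨d - 1, by omega⟩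
  have he : 1 ≤ e := by omega
  have heR : (0:ℝ) < e := by exact_mod_cast he
  refine ⟨(e:ℝ) ^ (-((e:ℝ) / 2)), Real.rpow_pos_of_pos heR _, ?_⟩
  intro n hn c hc D hD hD2 hyp
  classical
  choose! ε hε1 hε2 using hyp
  set L := levIdx (e + 1) n with hL
  set N := L.card with hN
  set f : (Fin (e+1) → ℕ) → (Fin (e+1) → ℝ) → ℝ :=
    fun r x => ∑ k ∈ boxIdx (e+1) r, ε r k * haarBox r k x with hf
  have hNlb : (n / e + 1) ^ e ≤ N := levIdx_card_lb he
  have hNpos : 0 < N := lt_of_lt_of_le (pow_pos (Nat.succ_pos _) e) hNlb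
  have hNR : (0:ℝ) < N := by exact_mod_cast hNpos
  have hrsum : ∀ r ∈ L, ∑ i, r i = n := fun r hr => (Finset.mem_filter.1 hr).2
  -- integrability of atoms
  have int_bb : ∀ (r s k l : Fin (e+1) → ℕ),
      IntegrableOn (fun x => haarBox r k x * haarBox s l x) (unitCube (e+1)) := by
    intro r s k l
    refine integrableOn_cube_of_bdd ((haarBox_measurable r k).mul (haarBox_measurable s l)) 1 ?_
    intro x
    rw [abs_mul]
    exact mul_le_one₀ (abs_haarBox_le_one _ _ _) (abs_nonneg _) (abs_haarBox_le_one _ _ _)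
  have int_Db : ∀ (r k : Fin (e+1) → ℕ),
      IntegrableOn (fun x => D x * haarBox r k x) (unitCube (e+1)) := by
    intro r k
    have h1 := hD.bdd_mul ((haarBox_measurable r k).aestronglyMeasurable)
      (Filter.Eventually.of_forall (fun x => by rw [Real.norm_eq_abs]; exact abs_haarBox_le_one _ _ _))
    have h2 : (fun x => D x * haarBox r k x) = (fun x => haarBox r k x * D x) :=
      funext fun x => mul_comm _ _
    rw [h2]
    exact h1
  have expand : ∀ r s : Fin (e+1) → ℕ, ∀ x, f r x * f s x
      = ∑ k ∈ boxIdx (e+1) r, ∑ l ∈ boxIdx (e+1) s,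
          (ε r k * ε s l) * (haarBox r k x * haarBox s l x) := by
    intro r s x
    rw [hf]
    rw [Finset.sum_mul_sum]
    exact Finset.sum_congr rfl fun k _ => Finset.sum_congr rfl fun l _ => by ring
  have int_ff : ∀ r s : Fin (e+1) → ℕ,
      IntegrableOn (fun x => f r x * f s x) (unitCube (e+1)) := by
    intro r s
    rw [show (fun x => f r x * f s x) = fun x => ∑ k ∈ boxIdx (e+1) r, ∑ l ∈ boxIdx (e+1) s,
      (ε r k * ε s l) * (haarBox r k x * haarBox s l x) from funext (expand r s)]
    exact integrable_finset_sum _ fun k _ => integrable_finset_sum _ fun l _ =>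
      (int_bb r s k l).const_mul _
  have int_Df : ∀ r : Fin (e+1) → ℕ,
      IntegrableOn (fun x => D x * f r x) (unitCube (e+1)) := by
    intro r
    rw [show (fun x => D x * f r x) = fun x => ∑ k ∈ boxIdx (e+1) r,
      ε r k * (D x * haarBox r k x) from funext fun x => by
        rw [hf, Finset.mul_sum]; exact Finset.sum_congr rfl fun k _ => by ring]
    exact integrable_finset_sum _ fun k _ => (int_Db r k).const_mul _
  -- orthonormality
  have hfrs : ∀ r ∈ L, ∀ s ∈ L,
      ∫ x in unitCube (e+1), f r x * f s x = if r = s then 1 else 0 := by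
    intro r hr s hs
    simp_rw [expand r s]
    rw [integral_finset_sum _ (fun k _ => integrable_finset_sum _ fun l _ =>
      (int_bb r s k l).const_mul _)]
    rw [Finset.sum_congr rfl (fun k _ => integral_finset_sum _ fun l _ =>
      (int_bb r s k l).const_mul _)]
    by_cases hrs : r = s
    · subst hrs
      rw [if_pos rfl]
      have hval : ∀ k ∈ boxIdx (e+1) r, ∀ l ∈ boxIdx (e+1) r,
          ∫ x in unitCube (e+1), haarBox r k x * haarBox r l x
            = if l = k then ((2:ℝ) ^ n)⁻¹ else 0 := by
        intro k hk l hl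
        by_cases hkl : l = k
        · subst hkl
          rw [if_pos rfl, integral_haarBox_sq hk, hrsum r hr]
        · rw [if_neg hkl, integral_haarBox_mul_eq_zero hk (Or.inr (Ne.symm hkl))]
      calc ∑ k ∈ boxIdx (e+1) r, ∑ l ∈ boxIdx (e+1) r,
            ∫ x in unitCube (e+1), (ε r k * ε r l) * (haarBox r k x * haarBox r l x)
          = ∑ k ∈ boxIdx (e+1) r, ((2:ℝ) ^ n)⁻¹ := by
            refine Finset.sum_congr rfl fun k hk => ?_
            rw [Finset.sum_congr rfl (fun l hl => by
              rw [integral_const_mul, hval k hk l hl, mul_ite, mul_zero])]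
            rw [Finset.sum_ite_eq' (boxIdx (e+1) r) k
              (fun l => ε r k * ε r l * ((2:ℝ) ^ n)⁻¹), if_pos hk]
            rcases hε1 r hr k hk with h | h <;> rw [h] <;> ring
        _ = 1 := by
            rw [Finset.sum_const, card_boxIdx, hrsum r hr, nsmul_eq_mul]
            rw [Nat.cast_pow, Nat.cast_ofNat]
            field_simp
    · rw [if_neg hrs]
      refine Finset.sum_eq_zero fun k hk => Finset.sum_eq_zero fun l hl => ?_
      rw [integral_const_mul, integral_haarBox_mul_eq_zero hk (Or.inl hrs), mul_zero]
  -- norm of F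
  set F : (Fin (e+1) → ℝ) → ℝ := fun x => ∑ r ∈ L, f r x with hF
  have int_DF : IntegrableOn (fun x => D x * F x) (unitCube (e+1)) := by
    rw [show (fun x => D x * F x) = fun x => ∑ r ∈ L, (D x * f r x) from
      funext fun x => by rw [hF, Finset.mul_sum]]
    exact integrable_finset_sum _ fun r _ => int_Df r
  have int_FF : IntegrableOn (fun x => F x * F x) (unitCube (e+1)) := by
    rw [show (fun x => F x * F x) = fun x => ∑ r ∈ L, ∑ s ∈ L, (f r x * f s x) from
      funext fun x => by rw [hF, Finset.sum_mul_sum]]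
    exact integrable_finset_sum _ fun r _ => integrable_finset_sum _ fun s _ => int_ff r s
  have hF2 : ∫ x in unitCube (e+1), F x * F x = N := by
    simp_rw [hF, Finset.sum_mul_sum]
    rw [integral_finset_sum _ (fun r _ => integrable_finset_sum _ fun s _ => int_ff r s)]
    rw [Finset.sum_congr rfl (fun r _ => integral_finset_sum _ fun s _ => int_ff r s)]
    rw [Finset.sum_congr rfl (fun r hr => Finset.sum_congr rfl fun s hs => hfrs r hr s hs)]
    rw [Finset.sum_congr rfl (fun r hr => Finset.sum_ite_eq L r (fun _ => (1:ℝ)))]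
    rw [Finset.sum_congr rfl (fun r hr => if_pos hr)]
    rw [Finset.sum_const, nsmul_eq_mul, mul_one]
  have hDF : c * N ≤ ∫ x in unitCube (e+1), D x * F x := by
    rw [show (fun x => D x * F x) = fun x => ∑ r ∈ L, (D x * f r x) from
      funext fun x => by rw [hF, Finset.mul_sum]]
    rw [integral_finset_sum _ fun r _ => int_Df r]
    calc c * N = ∑ _r ∈ L, c := by rw [Finset.sum_const, nsmul_eq_mul]; ring
      _ ≤ ∑ r ∈ L, ∫ x in unitCube (e+1), D x * f r x :=
        Finset.sum_le_sum fun r hr => hε2 r hr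
  -- Cauchy-Schwarz
  set A := ∫ x in unitCube (e+1), (D x) ^ 2 with hA
  set Bv := ∫ x in unitCube (e+1), D x * F x with hBv
  have hA0 : 0 ≤ A := integral_nonneg fun x => sq_nonneg _
  have key : Bv ^ 2 ≤ A * N := by
    have h0 : (0:ℝ) ≤ ∫ x in unitCube (e+1), ((N:ℝ) * D x - Bv * F x) ^ 2 :=
      integral_nonneg fun x => sq_nonneg _
    have hexp : ∫ x in unitCube (e+1), ((N:ℝ) * D x - Bv * F x) ^ 2
        = (N:ℝ)^2 * A - (2 * N * Bv) * Bv + Bv^2 * N := by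
      have hpt : ∀ x : Fin (e+1) → ℝ, ((N:ℝ) * D x - Bv * F x) ^ 2
          = (N:ℝ)^2 * (D x)^2 - (2 * N * Bv) * (D x * F x) + Bv^2 * (F x * F x) := by
        intro x; ring
      simp_rw [hpt]
      have i1 : Integrable (fun x => (N:ℝ)^2 * (D x)^2)
          (volume.restrict (unitCube (e+1))) := hD2.const_mul _
      have i2 : Integrable (fun x => (2 * (N:ℝ) * Bv) * (D x * F x))
          (volume.restrict (unitCube (e+1))) := int_DF.const_mul _
      have i3 : Integrable (fun x => Bv^2 * (F x * F x))
          (volume.restrict (unitCube (e+1))) := int_FF.const_mul _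
      have i12 : Integrable (fun x => (N:ℝ)^2 * (D x)^2 - (2 * (N:ℝ) * Bv) * (D x * F x))
          (volume.restrict (unitCube (e+1))) := i1.sub i2
      rw [integral_add i12 i3, integral_sub i1 i2,
        integral_const_mul, integral_const_mul, integral_const_mul, hF2, ← hA, ← hBv]
    rw [hexp] at h0
    nlinarith [hNR]
  have main1 : c * Real.sqrt N ≤ Real.sqrt A := by
    have hcN : c * N ≤ Bv := hDF
    have hBv0 : (0:ℝ) ≤ Bv := le_trans (by positivity) hcN
    have hsq : (c * N)^2 ≤ Bv^2 := pow_le_pow_left₀ (by positivity) hcN 2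
    have h1 : c^2 * N ≤ A := by nlinarith [hNR, key, hsq]
    have h2 : c * Real.sqrt N = Real.sqrt (c^2 * N) := by
      rw [Real.sqrt_mul (sq_nonneg c), Real.sqrt_sq hc.le]
    rw [h2]
    exact Real.sqrt_le_sqrt h1
  refine ⟨main1, ?_⟩
  -- second bound
  have hne : ((e+1:ℕ):ℝ) - 1 = (e:ℝ) := by push_cast; ring
  rw [hne]
  have hnn : (0:ℝ) ≤ (n:ℝ) / e := by positivity
  have h1 : ((n:ℝ)/e) ^ e ≤ (N:ℝ) := by
    have hlt : (n:ℝ)/e ≤ ((n/e : ℕ) : ℝ) + 1 := by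
      rw [div_le_iff₀ heR]
      have : n < (n / e + 1) * e := by
        have := Nat.div_add_mod n e
        have := Nat.mod_lt n (show 0 < e by omega)
        nlinarith
      calc (n:ℝ) ≤ ((n / e + 1) * e : ℕ) := by exact_mod_cast this.le
        _ = (((n/e:ℕ):ℝ) + 1) * e := by push_cast; ring
    calc ((n:ℝ)/e) ^ e ≤ (((n/e:ℕ):ℝ) + 1) ^ e := pow_le_pow_left₀ hnn hlt e
      _ = (((n/e + 1 : ℕ)) ^ e : ℕ) := by push_cast; ring
      _ ≤ (N:ℝ) := by exact_mod_cast hNlb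
  have h2 : Real.sqrt (((n:ℝ)/e) ^ e) ≤ Real.sqrt N := Real.sqrt_le_sqrt h1
  have h3 : Real.sqrt (((n:ℝ)/e) ^ e) = ((n:ℝ)/e) ^ ((e:ℝ)/2) := by
    rw [Real.sqrt_eq_rpow, ← Real.rpow_natCast ((n:ℝ)/e) e, ← Real.rpow_mul hnn]
    congr 1
    ring
  have h4 : ((n:ℝ)/e) ^ ((e:ℝ)/2) = (e:ℝ) ^ (-((e:ℝ)/2)) * (n:ℝ) ^ ((e:ℝ)/2) := by
    rw [Real.div_rpow (by positivity) heR.le, Real.rpow_neg heR.le]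
    ring
  calc c * (e:ℝ) ^ (-((e:ℝ)/2)) * (n:ℝ) ^ ((e:ℝ)/2)
      = c * (((n:ℝ)/e) ^ ((e:ℝ)/2)) := by rw [h4]; ring
    _ ≤ c * Real.sqrt N := by
        rw [← h3]
        exact mul_le_mul_of_nonneg_left (h3 ▸ (h3.symm ▸ h2)) hc.le
    _ ≤ Real.sqrt A := main1
end
end

section
/- Temlyakov's proof of the two-dimensional Small Ball inequality: for any real coefficients α_R indexed by dyadic rectangles R ⊆ [0,1)² with |R| = 2^{-n}, one has ‖Σ_{|R| = 2^{-n}} α_R h_R‖_∞ ≥ 2^{-n} Σ_{|R| = 2^{-n}} |α_R|. -/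
open MeasureTheory Finset

noncomputable section

namespace SB

lemma testBit_one (i : ℕ) : Nat.testBit 1 i = decide (0 = i) := by
  rw [show (1:ℕ) = 2^0 from rfl, Nat.testBit_two_pow]

lemma xor_div_eq (p t s : ℕ) (h : t < s) : (p ^^^ 2 ^ t) / 2 ^ s = p / 2 ^ s := by
  rw [← Nat.shiftRight_eq_div_pow, ← Nat.shiftRight_eq_div_pow]
  apply Nat.eq_of_testBit_eq
  intro i
  simp only [Nat.testBit_shiftRight, Nat.testBit_xor]
  rw [Nat.testBit_two_pow_of_ne (by omega)]
  simp

lemma xor_div_self (p t : ℕ) : (p ^^^ 2 ^ t) / 2 ^ t = (p / 2 ^ t) ^^^ 1 := by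
  rw [← Nat.shiftRight_eq_div_pow, ← Nat.shiftRight_eq_div_pow]
  apply Nat.eq_of_testBit_eq
  intro i
  simp only [Nat.testBit_shiftRight, Nat.testBit_xor, testBit_one]
  rcases Nat.eq_zero_or_pos i with h | h
  · simp [h, Nat.testBit_two_pow_self]
  · rw [Nat.testBit_two_pow_of_ne (by omega)]
    simp [show ¬ (0 = i) by omega]

lemma two_mul_xor_one (k : ℕ) : (2 * k) ^^^ 1 = 2 * k + 1 := by
  apply Nat.eq_of_testBit_eq
  intro i
  rw [Nat.testBit_xor, testBit_one]
  rcases Nat.eq_zero_or_pos i with h | h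
  · subst h
    simp [Nat.testBit_zero]
  · obtain ⟨i, rfl⟩ : ∃ j, i = j + 1 := ⟨i - 1, by omega⟩
    rw [Nat.testBit_add_one, Nat.testBit_add_one]
    simp [Nat.mul_div_cancel_left, show (2*k+1)/2 = k by omega, show (2*k)/2 = k by omega]

lemma two_mul_add_one_xor_one (k : ℕ) : (2 * k + 1) ^^^ 1 = 2 * k := by
  have := two_mul_xor_one k
  have h2 : (2*k) ^^^ 1 ^^^ 1 = 2*k := xor_cancel_right _ _
  rw [this] at h2; exact h2

lemma xor_one_eq_iff (x k : ℕ) : x ^^^ 1 = 2 * k ↔ x = 2 * k + 1 := by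
  constructor
  · intro h; have : x ^^^ 1 ^^^ 1 = (2*k) ^^^ 1 := by rw [h]
    rw [xor_cancel_right, two_mul_xor_one] at this; exact this
  · rintro rfl; exact two_mul_add_one_xor_one k

lemma xor_one_eq_iff' (x k : ℕ) : x ^^^ 1 = 2 * k + 1 ↔ x = 2 * k := by
  constructor
  · intro h; have : x ^^^ 1 ^^^ 1 = (2*k+1) ^^^ 1 := by rw [h]
    rw [xor_cancel_right, two_mul_add_one_xor_one] at this; exact this
  · rintro rfl; exact two_mul_xor_one k


/-- discrete haar value -/
def hv (n m k p : ℕ) : ℝ :=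
  (if p / 2 ^ (n - m) = 2 * k + 1 then 1 else 0) - (if p / 2 ^ (n - m) = 2 * k then 1 else 0)

lemma mem_dyadI_iff (a b j p : ℕ) :
    ((p : ℝ) / 2 ^ (a + b) ∈ dyadI a j) ↔ p / 2 ^ b = j := by
  have hb : (0:ℝ) < 2 ^ b := by positivity
  have ha : (0:ℝ) < 2 ^ a := by positivity
  have hab : (2:ℝ) ^ (a+b) = 2^a * 2^b := pow_add 2 a b
  constructor
  · rintro ⟨h1, h2⟩
    rw [div_le_div_iff₀ ha (by positivity)] at h1
    rw [div_lt_div_iff₀ (by positivity) ha] at h2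
    rw [hab] at h1 h2
    have h1' : (j:ℝ) * 2 ^ b ≤ p := by
      have := h1
      nlinarith
    have h2' : (p:ℝ) < (j + 1) * 2 ^ b := by nlinarith
    have h1n : j * 2 ^ b ≤ p := by exact_mod_cast (by push_cast; linarith : ((j * 2 ^ b : ℕ) : ℝ) ≤ p)
    have h2n : p < (j + 1) * 2 ^ b := by exact_mod_cast (by push_cast; linarith : ((p:ℕ):ℝ) < ((j+1) * 2 ^ b : ℕ))
    exact Nat.div_eq_of_lt_le (by linarith [h1n]) (by omega)
  · intro h
    have hb' : 0 < 2 ^ b := Nat.pow_pos (n := b) (by norm_num)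
    have h1 : j * 2 ^ b ≤ p := by
      subst h; exact Nat.div_mul_le_self p (2^b)
    have h2 : p < (j + 1) * 2 ^ b := by
      rw [← Nat.div_lt_iff_lt_mul hb']; omega
    have h1r : (j:ℝ) * 2 ^ b ≤ p := by exact_mod_cast Nat.cast_le.mpr h1
    have h2r : (p:ℝ) < ((j:ℝ) + 1) * 2 ^ b := by
      have := (Nat.cast_lt (α := ℝ)).mpr h2; push_cast at this; linarith
    constructor
    · rw [div_le_div_iff₀ ha (by positivity), hab]; nlinarith
    · rw [div_lt_div_iff₀ (by positivity) ha, hab]; nlinarith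

end SB

namespace SB2
open SB

lemma haar_eval (n m k p : ℕ) (hm : m ≤ n) :
    haar m k ((p : ℝ) / 2 ^ (n + 1)) = hv n m k p := by
  have he : n + 1 = (m + 1) + (n - m) := by omega
  rw [haar, hv]
  have h1 : ((p : ℝ) / 2 ^ (n+1) ∈ dyadI (m+1) (2*k+1)) ↔ p / 2 ^ (n - m) = 2*k+1 := by
    rw [he]; exact mem_dyadI_iff (m+1) (n-m) (2*k+1) p
  have h2 : ((p : ℝ) / 2 ^ (n+1) ∈ dyadI (m+1) (2*k)) ↔ p / 2 ^ (n - m) = 2*k := by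
    rw [he]; exact mem_dyadI_iff (m+1) (n-m) (2*k) p
  classical
  simp only [Pi.sub_apply, Set.indicator_apply]
  rw [if_congr h1 rfl rfl, if_congr h2 rfl rfl]

lemma hv_eq_zero (n m k p : ℕ) (h : p / 2 ^ (n - m + 1) ≠ k) : hv n m k p = 0 := by
  rw [hv, if_neg, if_neg, sub_zero]
  · intro hc
    rw [pow_succ, ← Nat.div_div_eq_div_mul, hc] at h
    omega
  · intro hc
    rw [pow_succ, ← Nat.div_div_eq_div_mul, hc] at h
    omega

lemma hv_self (n m p : ℕ) :
    hv n m (p / 2 ^ (n - m + 1)) p = if (p / 2 ^ (n - m)) % 2 = 1 then 1 else -1 := by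
  rw [hv, pow_succ, ← Nat.div_div_eq_div_mul]
  set x := p / 2 ^ (n - m) with hx
  have hxx : x = 2 * (x / 2) + x % 2 := by omega
  rcases Nat.mod_two_eq_zero_or_one x with h | h
  · rw [if_neg (by omega), if_pos (by omega), if_neg (by omega)]; norm_num
  · rw [if_pos (by omega), if_neg (by omega), if_pos (by omega)]; norm_num

lemma hv_mem (n m k p : ℕ) : hv n m k p = 0 ∨ hv n m k p = 1 ∨ hv n m k p = -1 := by
  by_cases h : p / 2 ^ (n - m + 1) = k
  · subst h
    rw [hv_self]
    split <;> simp
  · exact Or.inl (hv_eq_zero n m k p h)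

/-- flip the oscillation bit -/
lemma hv_flip (n m k p : ℕ) (hm : m ≤ n) :
    hv n m k (p ^^^ 2 ^ (n - m)) = - hv n m k p := by
  rw [hv, hv, xor_div_self]
  rw [if_congr (xor_one_eq_iff' _ k) rfl rfl, if_congr (xor_one_eq_iff _ k) rfl rfl]
  ring

/-- hv only depends on `p / 2^(n-m)`, so flipping a lower bit does nothing -/
lemma hv_flip_lo (n m k p t : ℕ) (ht : t < n - m) :
    hv n m k (p ^^^ 2 ^ t) = hv n m k p := by
  rw [hv, hv, xor_div_eq _ _ _ ht]

/-- counting: number of `p < M` with `p / D = c` is `D` -/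
lemma count_div (M D c : ℕ) (hD : 0 < D) (h : (c + 1) * D ≤ M) :
    (∑ p ∈ Finset.range M, if p / D = c then (1:ℝ) else 0) = D := by
  rw [← Finset.sum_filter]
  simp only [Finset.sum_const, nsmul_eq_mul, mul_one]
  congr 1
  have : Finset.filter (fun p => p / D = c) (Finset.range M) = Finset.Ico (c * D) ((c+1) * D) := by
    ext p
    simp only [Finset.mem_filter, Finset.mem_range, Finset.mem_Ico]
    constructor
    · rintro ⟨hp, rfl⟩
      exact ⟨Nat.div_mul_le_self p D, by rw [← Nat.div_lt_iff_lt_mul hD]; omega⟩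
    · rintro ⟨h1, h2⟩
      refine ⟨by omega, Nat.div_eq_of_lt_le (by linarith) h2⟩
  rw [this, Nat.card_Ico]
  have hD' : (c+1) * D - c * D = D := by
    rw [Nat.add_mul, one_mul, Nat.add_sub_cancel_left]
  rw [hD']

end SB2

namespace SB3
open SB SB2

lemma hv_sq (n m k p : ℕ) :
    hv n m k p * hv n m k p = if p / 2 ^ (n - m + 1) = k then 1 else 0 := by
  by_cases h : p / 2 ^ (n - m + 1) = k
  · rw [if_pos h, ← h, hv_self]
    split <;> norm_num
  · rw [if_neg h, hv_eq_zero n m k p h, mul_zero]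

lemma hv_orth (n m k k' : ℕ) (hm : m ≤ n) (hk : k < 2 ^ m) :
    (∑ p ∈ Finset.range (2 ^ (n + 1)), hv n m k p * hv n m k' p)
      = if k = k' then (2 ^ (n - m + 1) : ℝ) else 0 := by
  by_cases h : k = k'
  · subst h
    rw [if_pos rfl]
    calc (∑ p ∈ Finset.range (2 ^ (n + 1)), hv n m k p * hv n m k p)
        = ∑ p ∈ Finset.range (2 ^ (n + 1)), if p / 2 ^ (n - m + 1) = k then (1:ℝ) else 0 := by
          exact Finset.sum_congr rfl fun p _ => hv_sq n m k p
      _ = (((2 ^ (n - m + 1) : ℕ)) : ℝ) := by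
          apply count_div _ _ _ (Nat.pow_pos (by norm_num))
          calc (k + 1) * 2 ^ (n - m + 1) ≤ 2 ^ m * 2 ^ (n - m + 1) :=
                Nat.mul_le_mul_right _ (by omega)
            _ = 2 ^ (n + 1) := by rw [← pow_add]; congr 1; omega
      _ = _ := by push_cast; ring
  · rw [if_neg h]
    apply Finset.sum_eq_zero
    intro p _
    by_cases hkp : p / 2 ^ (n - m + 1) = k
    · rw [hv_eq_zero n m k' p (by omega), mul_zero]
    · rw [hv_eq_zero n m k p hkp, zero_mul]

lemma sum_flip_zero (N t : ℕ) (ht : t < N) (F : ℕ → ℝ)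
    (hF : ∀ p, F (p ^^^ 2 ^ t) = - F p) :
    ∑ p ∈ Finset.range (2 ^ N), F p = 0 := by
  apply Finset.sum_involution (g := fun p _ => p ^^^ 2 ^ t)
  · intro p _
    rw [hF]; ring
  · intro p _ hne heq
    have := congrArg (Nat.testBit · t) heq
    simp [Nat.testBit_xor, Nat.testBit_two_pow_self] at this
  · intro p _
    simp [Nat.xor_assoc]
  · intro p hp
    rw [Finset.mem_range] at hp ⊢
    exact Nat.xor_lt_two_pow hp (Nat.pow_lt_pow_right (by norm_num) ht)

lemma sum2_flip_p (N t : ℕ) (ht : t < N) (F : ℕ → ℕ → ℝ)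
    (hF : ∀ p q, F (p ^^^ 2 ^ t) q = - F p q) :
    ∑ p ∈ Finset.range (2 ^ N), ∑ q ∈ Finset.range (2 ^ N), F p q = 0 := by
  apply sum_flip_zero N t ht
  intro p
  rw [← Finset.sum_neg_distrib]
  exact Finset.sum_congr rfl fun q _ => hF p q

lemma sum2_flip_q (N t : ℕ) (ht : t < N) (F : ℕ → ℕ → ℝ)
    (hF : ∀ p q, F p (q ^^^ 2 ^ t) = - F p q) :
    ∑ p ∈ Finset.range (2 ^ N), ∑ q ∈ Finset.range (2 ^ N), F p q = 0 := by
  apply Finset.sum_eq_zero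
  intro p _
  exact sum_flip_zero N t ht (F p) (hF p)

end SB3

namespace SB4
open SB SB2 SB3

variable (n : ℕ) (α : ℕ → (Fin 2 → ℕ) → ℝ)

/-- sign of the coefficient (±1, never 0) -/
def sgn (j : ℕ) (k : Fin 2 → ℕ) : ℝ := if 0 ≤ α j k then 1 else -1

lemma sgn_mul_self (j : ℕ) (k : Fin 2 → ℕ) : α j k * sgn α j k = |α j k| := by
  rw [sgn]; split
  · rw [abs_of_nonneg ‹_›, mul_one]
  · rw [abs_of_neg (by linarith [not_le.mp ‹¬ 0 ≤ α j k›]), mul_neg_one]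

/-- the sign function `f_j` evaluated at grid point `(p,q)` -/
def ff (j p q : ℕ) : ℝ :=
  ∑ k ∈ boxIdx 2 ![j, n - j], sgn α j k * (hv n j (k 0) p * hv n (n - j) (k 1) q)

lemma ff_flip_hi (j j₀ p q : ℕ) (h : j < j₀) (h₀ : j₀ ≤ n) :
    ff n α j (p ^^^ 2 ^ (n - j₀)) q = ff n α j p q :=
  Finset.sum_congr rfl fun k _ => by rw [hv_flip_lo n j _ p _ (by omega)]

lemma ff_flip_self_p (j p q : ℕ) (h : j ≤ n) :
    ff n α j (p ^^^ 2 ^ (n - j)) q = - ff n α j p q := by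
  rw [ff, ff, ← Finset.sum_neg_distrib]
  exact Finset.sum_congr rfl fun k _ => by rw [hv_flip n j _ p h]; ring

lemma ff_flip_lo (j j₀ p q : ℕ) (h : j₀ < j) (hj : j ≤ n) :
    ff n α j p (q ^^^ 2 ^ j₀) = ff n α j p q :=
  Finset.sum_congr rfl fun k _ => by rw [hv_flip_lo n (n - j) _ q _ (by omega)]

lemma ff_flip_self_q (j p q : ℕ) (h : j ≤ n) :
    ff n α j p (q ^^^ 2 ^ j) = - ff n α j p q := by
  rw [ff, ff, ← Finset.sum_neg_distrib]
  refine Finset.sum_congr rfl fun k _ => ?_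
  have : n - (n - j) = j := by omega
  rw [show (2:ℕ) ^ j = 2 ^ (n - (n - j)) by rw [this], hv_flip n (n - j) _ q (by omega)]
  ring

lemma mem_boxIdx {j : ℕ} {k : Fin 2 → ℕ} :
    k ∈ boxIdx 2 ![j, n - j] ↔ k 0 < 2 ^ j ∧ k 1 < 2 ^ (n - j) := by
  rw [boxIdx, Fintype.mem_piFinset]
  constructor
  · intro h
    exact ⟨by simpa using h 0, by simpa using h 1⟩
  · rintro ⟨h0, h1⟩ i
    fin_cases i <;> simpa

lemma ff_pm (j p q : ℕ) (hj : j ≤ n) (hp : p < 2 ^ (n + 1)) (hq : q < 2 ^ (n + 1)) :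
    ff n α j p q = 1 ∨ ff n α j p q = -1 := by
  set κ : Fin 2 → ℕ := ![p / 2 ^ (n - j + 1), q / 2 ^ (j + 1)] with hκ
  have hκ0 : κ 0 = p / 2 ^ (n - j + 1) := rfl
  have hκ1 : κ 1 = q / 2 ^ (j + 1) := rfl
  have hjq : n - (n - j) = j := by omega
  have hmem : κ ∈ boxIdx 2 ![j, n - j] := by
    rw [mem_boxIdx]
    constructor
    · rw [hκ0, Nat.div_lt_iff_lt_mul (Nat.pow_pos (by norm_num)), ← pow_add]
      calc p < 2 ^ (n+1) := hp
        _ ≤ 2 ^ (j + (n - j + 1)) := Nat.pow_le_pow_right (by norm_num) (by omega)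
    · rw [hκ1, Nat.div_lt_iff_lt_mul (Nat.pow_pos (by norm_num)), ← pow_add]
      calc q < 2 ^ (n+1) := hq
        _ ≤ 2 ^ (n - j + (j + 1)) := Nat.pow_le_pow_right (by norm_num) (by omega)
  have hsum : ff n α j p q = sgn α j κ * (hv n j (κ 0) p * hv n (n - j) (κ 1) q) := by
    rw [ff]
    apply Finset.sum_eq_single_of_mem κ hmem
    intro k _ hk
    have : k 0 ≠ κ 0 ∨ k 1 ≠ κ 1 := by
      by_contra hc
      push_neg at hc
      apply hk
      funext i
      fin_cases i
      · exact hc.1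
      · exact hc.2
    rcases this with h | h
    · rw [hv_eq_zero n j _ p (by rw [hκ0] at h; omega), zero_mul, mul_zero]
    · rw [hv_eq_zero n (n - j) _ q (by rw [hjq, ← hκ1]; exact fun hc => h hc.symm), mul_zero, mul_zero]
  rw [hsum, hκ0, hκ1, show q / 2 ^ (j+1) = q / 2 ^ (n - (n - j) + 1) by rw [hjq]]
  rw [hv_self, hv_self, sgn]
  split <;> split <;> split <;> norm_num

end SB4

namespace SB5
open SB SB2 SB3 SB4

variable (n : ℕ) (α : ℕ → (Fin 2 → ℕ) → ℝ)

/-- the Riesz product at grid point `(p,q)` -/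
def Ψ (p q : ℕ) : ℝ := ∏ j ∈ Finset.range (n + 1), (1 + ff n α j p q)

lemma Psi_nonneg (p q : ℕ) (hp : p < 2 ^ (n + 1)) (hq : q < 2 ^ (n + 1)) :
    0 ≤ Ψ n α p q := by
  apply Finset.prod_nonneg
  intro j hj
  rcases ff_pm n α j p q (by simpa using Nat.lt_succ_iff.mp (Finset.mem_range.mp hj)) hp hq with h | h
    <;> rw [h] <;> norm_num

lemma Psi_expand (p q : ℕ) :
    Ψ n α p q = ∑ S ∈ (Finset.range (n + 1)).powerset, ∏ j ∈ S, ff n α j p q := by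
  rw [Ψ]
  have : ∀ j ∈ Finset.range (n+1), (1 + ff n α j p q) = ff n α j p q + 1 := fun j _ => by ring
  rw [Finset.prod_congr rfl this, Finset.prod_add]
  exact Finset.sum_congr rfl fun S _ => by rw [Finset.prod_const_one, mul_one]

/-- product over S flips sign under flipping p-bit `n - max S` -/
lemma prod_flip_p (S : Finset ℕ) (hS : S.Nonempty) (hSr : ∀ j ∈ S, j ≤ n) (p q : ℕ) :
    ∏ j ∈ S, ff n α j (p ^^^ 2 ^ (n - S.max' hS)) q = - ∏ j ∈ S, ff n α j p q := by
  have hmax : S.max' hS ∈ S := S.max'_mem hS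
  rw [← Finset.mul_prod_erase S _ hmax, ← Finset.mul_prod_erase S (fun j => ff n α j p q) hmax]
  rw [ff_flip_self_p n α _ p q (hSr _ hmax)]
  rw [Finset.prod_congr rfl (fun j hj => ff_flip_hi n α j (S.max' hS) p q
    (lt_of_le_of_ne (S.le_max' j (Finset.mem_of_mem_erase hj))
      (Finset.ne_of_mem_erase hj)) (hSr _ hmax))]
  ring

/-- product over S flips sign under flipping q-bit `min S` -/
lemma prod_flip_q (S : Finset ℕ) (hS : S.Nonempty) (hSr : ∀ j ∈ S, j ≤ n) (p q : ℕ) :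
    ∏ j ∈ S, ff n α j p (q ^^^ 2 ^ S.min' hS) = - ∏ j ∈ S, ff n α j p q := by
  have hmin : S.min' hS ∈ S := S.min'_mem hS
  rw [← Finset.mul_prod_erase S _ hmin, ← Finset.mul_prod_erase S (fun j => ff n α j p q) hmin]
  rw [ff_flip_self_q n α _ p q (hSr _ hmin)]
  have hcongr : ∀ j ∈ S.erase (S.min' hS), ff n α j p (q ^^^ 2 ^ S.min' hS) = ff n α j p q := by
    intro j hj
    exact ff_flip_lo n α j _ p q
      (lt_of_le_of_ne (S.min'_le j (Finset.mem_of_mem_erase hj))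
        (Ne.symm (Finset.ne_of_mem_erase hj)))
      (hSr _ (Finset.mem_of_mem_erase hj))
  rw [Finset.prod_congr rfl hcongr]
  ring

end SB5

namespace SB5
open SB SB2 SB3 SB4

variable (n : ℕ) (α : ℕ → (Fin 2 → ℕ) → ℝ)

/-- vanishing of `⟨h_R, ∏_{j ∈ S} f_j⟩` for `S ≠ {j*}` -/
lemma Tzero (j' : ℕ) (k' : Fin 2 → ℕ) (hj' : j' ≤ n) (S : Finset ℕ)
    (hSr : S ⊆ Finset.range (n + 1)) (hne : S ≠ {j'}) :
    ∑ p ∈ Finset.range (2 ^ (n + 1)), ∑ q ∈ Finset.range (2 ^ (n + 1)),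
      (hv n j' (k' 0) p * hv n (n - j') (k' 1) q) * ∏ j ∈ S, ff n α j p q = 0 := by
  have hSle : ∀ j ∈ S, j ≤ n := fun j hj => Nat.lt_succ_iff.mp (Finset.mem_range.mp (hSr hj))
  rcases S.eq_empty_or_nonempty with rfl | hS
  · -- S = ∅ : flip the oscillation bit of h_R itself
    apply sum2_flip_p (n + 1) (n - j') (by omega)
    intro p q
    simp only [Finset.prod_empty, mul_one]
    rw [hv_flip n j' _ p hj']
    ring
  · by_cases hmax : j' < S.max' hS
    · -- flip p-bit n - max S
      apply sum2_flip_p (n + 1) (n - S.max' hS) (by omega)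
      intro p q
      rw [prod_flip_p n α S hS hSle p q,
        hv_flip_lo n j' (k' 0) p _ (by have := hSle _ (S.max'_mem hS); omega)]
      ring
    · by_cases hmin : S.min' hS < j'
      · -- flip q-bit min S
        apply sum2_flip_q (n + 1) (S.min' hS) (by have := hSle _ (S.min'_mem hS); omega)
        intro p q
        rw [prod_flip_q n α S hS hSle p q,
          hv_flip_lo n (n - j') (k' 1) q _ (by omega)]
        ring
      · -- otherwise S = {j'}
        exfalso
        apply hne
        apply Finset.eq_singleton_iff_nonempty_unique_mem.mpr
        refine ⟨hS, fun j hj => ?_⟩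
        have h1 := S.le_max' j hj
        have h2 := S.min'_le j hj
        omega

/-- the main pairing : `⟨h_R, f_{j*}⟩ = sgn α_R · 2^{n+2}` -/
lemma Tself (j' : ℕ) (k' : Fin 2 → ℕ) (hj' : j' ≤ n) (hk' : k' ∈ boxIdx 2 ![j', n - j']) :
    ∑ p ∈ Finset.range (2 ^ (n + 1)), ∑ q ∈ Finset.range (2 ^ (n + 1)),
      (hv n j' (k' 0) p * hv n (n - j') (k' 1) q) * ff n α j' p q
      = sgn α j' k' * 2 ^ (n + 2) := by
  have hk0 : k' 0 < 2 ^ j' := ((mem_boxIdx n).mp hk').1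
  have hk1 : k' 1 < 2 ^ (n - j') := ((mem_boxIdx n).mp hk').2
  have step1 : ∀ p q, (hv n j' (k' 0) p * hv n (n - j') (k' 1) q) * ff n α j' p q
      = ∑ k ∈ boxIdx 2 ![j', n - j'], sgn α j' k *
          ((hv n j' (k' 0) p * hv n j' (k 0) p) * (hv n (n - j') (k' 1) q * hv n (n - j') (k 1) q)) := by
    intro p q
    rw [ff, Finset.mul_sum]
    exact Finset.sum_congr rfl fun k _ => by ring
  simp only [step1]
  have hjq : n - (n - j') = j' := by omega
  calc ∑ p ∈ Finset.range (2 ^ (n + 1)), ∑ q ∈ Finset.range (2 ^ (n + 1)),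
        ∑ k ∈ boxIdx 2 ![j', n - j'], sgn α j' k *
          ((hv n j' (k' 0) p * hv n j' (k 0) p) * (hv n (n - j') (k' 1) q * hv n (n - j') (k 1) q))
      = ∑ p ∈ Finset.range (2 ^ (n + 1)), ∑ k ∈ boxIdx 2 ![j', n - j'],
          ∑ q ∈ Finset.range (2 ^ (n + 1)), sgn α j' k *
          ((hv n j' (k' 0) p * hv n j' (k 0) p) * (hv n (n - j') (k' 1) q * hv n (n - j') (k 1) q)) :=
        Finset.sum_congr rfl fun p _ => Finset.sum_comm
    _ = ∑ k ∈ boxIdx 2 ![j', n - j'], ∑ p ∈ Finset.range (2 ^ (n + 1)),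
          ∑ q ∈ Finset.range (2 ^ (n + 1)), sgn α j' k *
          ((hv n j' (k' 0) p * hv n j' (k 0) p) * (hv n (n - j') (k' 1) q * hv n (n - j') (k 1) q)) :=
        Finset.sum_comm
    _ = ∑ k ∈ boxIdx 2 ![j', n - j'], sgn α j' k *
          ((∑ p ∈ Finset.range (2 ^ (n + 1)), hv n j' (k' 0) p * hv n j' (k 0) p) *
           (∑ q ∈ Finset.range (2 ^ (n + 1)), hv n (n - j') (k' 1) q * hv n (n - j') (k 1) q)) := by
        refine Finset.sum_congr rfl fun k _ => ?_
        rw [Finset.sum_mul_sum, Finset.mul_sum]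
        exact Finset.sum_congr rfl fun p _ => by rw [Finset.mul_sum]
    _ = ∑ k ∈ boxIdx 2 ![j', n - j'], sgn α j' k *
          ((if k' 0 = k 0 then (2 ^ (n - j' + 1) : ℝ) else 0) *
           (if k' 1 = k 1 then (2 ^ (j' + 1) : ℝ) else 0)) := by
        refine Finset.sum_congr rfl fun k _ => ?_
        rw [hv_orth n j' (k' 0) (k 0) hj' hk0,
          hv_orth n (n - j') (k' 1) (k 1) (by omega) hk1, hjq]
    _ = sgn α j' k' * ((2 ^ (n - j' + 1) : ℝ) * (2 ^ (j' + 1) : ℝ)) := by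
        rw [Finset.sum_eq_single_of_mem k' hk']
        · rw [if_pos rfl, if_pos rfl]
        · intro k _ hk
          have : k' 0 ≠ k 0 ∨ k' 1 ≠ k 1 := by
            by_contra hc
            push_neg at hc
            exact hk (by funext i; fin_cases i <;> simp [hc.1.symm, hc.2.symm])
          rcases this with h | h
          · rw [if_neg h, zero_mul, mul_zero]
          · rw [if_neg h, mul_zero, mul_zero]
    _ = sgn α j' k' * 2 ^ (n + 2) := by
        rw [← pow_add]
        congr 2
        omega

end SB5

namespace SB5
open SB SB2 SB3 SB4

variable (n : ℕ) (α : ℕ → (Fin 2 → ℕ) → ℝ)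

lemma swap3 {β : Type*} {A : Finset β} {P Q : Finset ℕ} (g : β → ℕ → ℕ → ℝ) :
    ∑ p ∈ P, ∑ q ∈ Q, ∑ x ∈ A, g x p q = ∑ x ∈ A, ∑ p ∈ P, ∑ q ∈ Q, g x p q :=
  (Finset.sum_congr rfl fun _ _ => Finset.sum_comm).trans Finset.sum_comm

lemma pair_Psi (j' : ℕ) (k' : Fin 2 → ℕ) (hj' : j' ≤ n) (hk' : k' ∈ boxIdx 2 ![j', n - j']) :
    ∑ p ∈ Finset.range (2 ^ (n + 1)), ∑ q ∈ Finset.range (2 ^ (n + 1)),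
      (hv n j' (k' 0) p * hv n (n - j') (k' 1) q) * Ψ n α p q
      = sgn α j' k' * 2 ^ (n + 2) := by
  simp only [Psi_expand, Finset.mul_sum]
  rw [swap3 (fun S p q => (hv n j' (k' 0) p * hv n (n - j') (k' 1) q) * ∏ j ∈ S, ff n α j p q)]
  rw [Finset.sum_eq_single_of_mem ({j'} : Finset ℕ)
    (Finset.mem_powerset.mpr (Finset.singleton_subset_iff.mpr (Finset.mem_range.mpr (by omega))))]
  · simp only [Finset.prod_singleton]
    exact Tself n α j' k' hj' hk'
  · intro S hS hne
    exact Tzero n α j' k' hj' S (Finset.mem_powerset.mp hS) hne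

lemma Psi_sum :
    ∑ p ∈ Finset.range (2 ^ (n + 1)), ∑ q ∈ Finset.range (2 ^ (n + 1)), Ψ n α p q
      = (2 ^ (n + 1) : ℝ) * 2 ^ (n + 1) := by
  simp only [Psi_expand]
  rw [swap3 (fun S p q => ∏ j ∈ S, ff n α j p q)]
  rw [Finset.sum_eq_single_of_mem (∅ : Finset ℕ)
    (Finset.mem_powerset.mpr (Finset.empty_subset _))]
  · simp [Finset.prod_empty, Finset.sum_const, Finset.card_range]
  · intro S hS hne
    have hS' : S.Nonempty := Finset.nonempty_of_ne_empty hne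
    have hSle : ∀ j ∈ S, j ≤ n := fun j hj =>
      Nat.lt_succ_iff.mp (Finset.mem_range.mp (Finset.mem_powerset.mp hS hj))
    apply sum2_flip_p (n + 1) (n - S.max' hS') (by omega)
    intro p q
    exact prod_flip_p n α S hS' hSle p q

end SB5

/-- Temlyakov's proof of the two-dimensional Small Ball inequality: for any real
coefficients `α_R` over dyadic rectangles `R ⊆ [0,1)²` of area `2^{-n}`,
`‖Σ α_R h_R‖_∞ ≥ 2^{-n} Σ |α_R|`. -/
theorem stmt_15 (n : ℕ) (α : ℕ → (Fin 2 → ℕ) → ℝ) (G : (Fin 2 → ℝ) → ℝ)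
    (hG : ∀ x, G x = ∑ j ∈ Finset.range (n + 1),
      ∑ k ∈ boxIdx 2 ![j, n - j], α j k * haarBox ![j, n - j] k x) :
    ∀ B : ℝ, (∀ x ∈ unitCube 2, |G x| ≤ B) →
      (2 : ℝ) ^ (-(n : ℤ)) *
        ∑ j ∈ Finset.range (n + 1), ∑ k ∈ boxIdx 2 ![j, n - j], |α j k| ≤ B := by
  intro B hB
  classical
  set M : ℕ := 2 ^ (n + 1) with hM
  set pt : ℕ → ℕ → (Fin 2 → ℝ) := fun p q => ![(p : ℝ) / 2 ^ (n + 1), (q : ℝ) / 2 ^ (n + 1)]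
    with hpt
  have hpow : (0:ℝ) < 2 ^ (n + 1) := by positivity
  have hpt_mem : ∀ p q : ℕ, p < M → q < M → pt p q ∈ unitCube 2 := by
    intro p q hp hq
    rw [unitCube, Set.mem_pi]
    intro i _
    have hcoord : ∀ r : ℕ, r < M → ((r:ℝ)/2^(n+1)) ∈ Set.Ico (0:ℝ) 1 := by
      intro r hr
      constructor
      · positivity
      · rw [div_lt_one hpow]
        exact_mod_cast hr
    fin_cases i
    · exact hcoord p hp
    · exact hcoord q hq
  have hGeval : ∀ p q : ℕ, G (pt p q) = ∑ j ∈ Finset.range (n + 1),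
      ∑ k ∈ boxIdx 2 ![j, n - j], α j k *
        (SB.hv n j (k 0) p * SB.hv n (n - j) (k 1) q) := by
    intro p q
    rw [hG]
    refine Finset.sum_congr rfl fun j hj => Finset.sum_congr rfl fun k _ => ?_
    have hjn : j ≤ n := Nat.lt_succ_iff.mp (Finset.mem_range.mp hj)
    congr 1
    rw [haarBox, Fin.prod_univ_two]
    simp only [Matrix.cons_val_zero, Matrix.cons_val_one, Matrix.head_cons, hpt]
    rw [SB2.haar_eval n j (k 0) p hjn, SB2.haar_eval n (n - j) (k 1) q (by omega)]
  -- the key identity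
  have key : ∑ p ∈ Finset.range M, ∑ q ∈ Finset.range M, G (pt p q) * SB5.Ψ n α p q
      = 2 ^ (n + 2) * ∑ j ∈ Finset.range (n + 1), ∑ k ∈ boxIdx 2 ![j, n - j], |α j k| := by
    simp only [hGeval, Finset.sum_mul]
    rw [SB5.swap3 (fun j p q => ∑ k ∈ boxIdx 2 ![j, n - j],
      (α j k * (SB.hv n j (k 0) p * SB.hv n (n - j) (k 1) q)) * SB5.Ψ n α p q)]
    rw [Finset.mul_sum]
    refine Finset.sum_congr rfl fun j hj => ?_
    have hjn : j ≤ n := Nat.lt_succ_iff.mp (Finset.mem_range.mp hj)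
    rw [SB5.swap3 (fun k p q =>
      (α j k * (SB.hv n j (k 0) p * SB.hv n (n - j) (k 1) q)) * SB5.Ψ n α p q)]
    rw [Finset.mul_sum]
    refine Finset.sum_congr rfl fun k hk => ?_
    have : ∑ p ∈ Finset.range M, ∑ q ∈ Finset.range M,
        (α j k * (SB.hv n j (k 0) p * SB.hv n (n - j) (k 1) q)) * SB5.Ψ n α p q
        = α j k * ∑ p ∈ Finset.range M, ∑ q ∈ Finset.range M,
          (SB.hv n j (k 0) p * SB.hv n (n - j) (k 1) q) * SB5.Ψ n α p q := by
      rw [Finset.mul_sum]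
      refine Finset.sum_congr rfl fun p _ => ?_
      rw [Finset.mul_sum]
      exact Finset.sum_congr rfl fun q _ => by ring
    rw [this, hM, SB5.pair_Psi n α j k hjn hk, ← mul_assoc, SB4.sgn_mul_self α j k]
    ring
  -- the upper bound
  have bound : ∑ p ∈ Finset.range M, ∑ q ∈ Finset.range M, G (pt p q) * SB5.Ψ n α p q
      ≤ B * ((2 ^ (n + 1) : ℝ) * 2 ^ (n + 1)) := by
    calc ∑ p ∈ Finset.range M, ∑ q ∈ Finset.range M, G (pt p q) * SB5.Ψ n α p q
        ≤ ∑ p ∈ Finset.range M, ∑ q ∈ Finset.range M, B * SB5.Ψ n α p q := by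
          refine Finset.sum_le_sum fun p hp => Finset.sum_le_sum fun q hq => ?_
          have hp' := Finset.mem_range.mp hp
          have hq' := Finset.mem_range.mp hq
          have hΨ := SB5.Psi_nonneg n α p q (by omega) (by omega)
          have hGb : G (pt p q) ≤ B :=
            le_trans (le_abs_self _) (hB _ (hpt_mem p q hp' hq'))
          exact mul_le_mul_of_nonneg_right hGb hΨ
      _ = B * ((2 ^ (n + 1) : ℝ) * 2 ^ (n + 1)) := by
          have hfac : ∑ p ∈ Finset.range M, ∑ q ∈ Finset.range M, B * SB5.Ψ n α p q
              = B * ∑ p ∈ Finset.range M, ∑ q ∈ Finset.range M, SB5.Ψ n α p q := by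
            rw [Finset.mul_sum]
            exact Finset.sum_congr rfl fun p _ => (Finset.mul_sum _ _ _).symm
          rw [hfac, hM, SB5.Psi_sum n α]
  -- conclude
  rw [key] at bound
  set A := ∑ j ∈ Finset.range (n + 1), ∑ k ∈ boxIdx 2 ![j, n - j], |α j k| with hA
  have hApos : (0:ℝ) ≤ A := by
    rw [hA]
    exact Finset.sum_nonneg fun j _ => Finset.sum_nonneg fun k _ => abs_nonneg _
  have h1 : (2:ℝ) ^ (n + 1) * 2 ^ (n + 1) = 2 ^ n * 2 ^ (n + 2) := by
    rw [← pow_add, ← pow_add]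
    congr 1
    omega
  have h2 : A ≤ B * 2 ^ n := by
    have h3 : (0:ℝ) < 2 ^ (n + 2) := by positivity
    have hb : A * 2 ^ (n + 2) ≤ (B * 2 ^ n) * 2 ^ (n + 2) := by
      calc A * 2 ^ (n + 2) = 2 ^ (n + 2) * A := mul_comm _ _
        _ ≤ B * ((2:ℝ) ^ (n + 1) * 2 ^ (n + 1)) := bound
        _ = (B * 2 ^ n) * 2 ^ (n + 2) := by rw [h1]; ring
    exact le_of_mul_le_mul_right hb h3
  have hzp : (2:ℝ) ^ (-(n:ℤ)) = ((2:ℝ) ^ n)⁻¹ := by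
    rw [zpow_neg, zpow_natCast]
  rw [hzp]
  rw [inv_mul_le_iff₀ (by positivity)]
  linarith [h2]
end
end

section
/- Sidon's theorem for lacunary series (finite form): there is a constant C(λ) such that for any finite lacunary sequence of positive integers n₁ < n₂ < ⋯ < n_N with n_{k+1}/n_k ≥ λ > 2 and any real coefficients c_k, one has sup_x |Σ_{k=1}^N c_k sin(n_k x)| ≥ C(λ) Σ_{k=1}^N |c_k|. -/
open MeasureTheory Finset intervalIntegral
open scoped Real

noncomputable section

namespace SidonAux

variable (n : ℕ → ℕ) (s : ℕ → ℝ)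

/-- Riesz product over index set `t`. -/
def RP (t : Finset ℕ) (x : ℝ) : ℝ := ∏ k ∈ t, (1 + s k * Real.sin (n k * x))

lemma contRP (t : Finset ℕ) : Continuous (RP n s t) := by
  apply continuous_finset_prod
  intro k _
  fun_prop

def QQ (t : Finset ℕ) (m : ℤ) : ℂ :=
  ∫ x in (0:ℝ)..(2*Real.pi), Complex.exp (m * x * Complex.I) * (RP n s t x : ℂ)

lemma contQint (t : Finset ℕ) (m : ℤ) :
    Continuous fun x : ℝ => Complex.exp (m * x * Complex.I) * (RP n s t x : ℂ) := by
  apply Continuous.mul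
  · exact Complex.continuous_exp.comp (by fun_prop)
  · exact Complex.continuous_ofReal.comp (contRP n s t)

lemma intgQ (t : Finset ℕ) (m : ℤ) :
    IntervalIntegrable (fun x : ℝ => Complex.exp (m * x * Complex.I) * (RP n s t x : ℂ))
      volume 0 (2*Real.pi) :=
  (contQint n s t m).intervalIntegrable _ _

lemma two_I_ne : (2 * Complex.I) ≠ 0 := by simp [Complex.I_ne_zero]

lemma csin_exp (y : ℂ) : Complex.sin y
    = (Complex.exp (y * Complex.I) - Complex.exp (-y * Complex.I)) / (2*Complex.I) := by
  rw [Complex.sin, eq_div_iff two_I_ne]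
  ring_nf
  rw [Complex.I_sq]
  ring

lemma QQ_empty (m : ℤ) : QQ n s ∅ m = if m = 0 then (2*Real.pi : ℂ) else 0 := by
  unfold QQ RP
  simp only [Finset.prod_empty, Complex.ofReal_one, mul_one]
  rcases eq_or_ne m 0 with h | h
  · simp [h]
  · rw [if_neg h]
    have hrw : ∀ x : ℝ, Complex.exp ((m:ℂ) * x * Complex.I)
        = Complex.exp (((m:ℂ) * Complex.I) * x) := by
      intro x; congr 1; ring
    simp only [hrw]
    rw [integral_exp_mul_complex (by simp [h, Complex.I_ne_zero])]
    have h2 : Complex.exp ((m:ℂ) * Complex.I * (2*(Real.pi:ℂ))) = 1 := by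
      rw [show ((m:ℂ) * Complex.I * (2*(Real.pi:ℂ))) = m * (2*(Real.pi:ℂ)*Complex.I) by ring]
      exact_mod_cast Complex.exp_int_mul_two_pi_mul_I m
    push_cast
    simp [h2]

lemma QQ_insert (t : Finset ℕ) (a : ℕ) (ha : a ∉ t) (m : ℤ) :
    QQ n s (insert a t) m = QQ n s t m
      + (s a : ℂ) / (2*Complex.I) * (QQ n s t (m + n a) - QQ n s t (m - n a)) := by
  unfold QQ
  have hpt : ∀ x : ℝ,
      Complex.exp ((m:ℂ) * x * Complex.I) * (RP n s (insert a t) x : ℂ)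
        = Complex.exp ((m:ℂ) * x * Complex.I) * (RP n s t x : ℂ)
          + (s a : ℂ) / (2*Complex.I) *
            (Complex.exp ((↑(m + (n a:ℤ)):ℂ) * x * Complex.I) * (RP n s t x : ℂ)
             - Complex.exp ((↑(m - (n a:ℤ)):ℂ) * x * Complex.I) * (RP n s t x : ℂ)) := by
    intro x
    have hprod : RP n s (insert a t) x = (1 + s a * Real.sin ((n a : ℝ) * x)) * RP n s t x := by
      rw [RP, RP, Finset.prod_insert ha]
    have e1 : Complex.exp (((m:ℂ) + (n a:ℂ)) * x * Complex.I)
        = Complex.exp ((m:ℂ) * x * Complex.I) * Complex.exp ((n a:ℂ) * x * Complex.I) := by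
      rw [← Complex.exp_add]; congr 1; ring
    have e2 : Complex.exp (((m:ℂ) - (n a:ℂ)) * x * Complex.I)
        = Complex.exp ((m:ℂ) * x * Complex.I) * Complex.exp (-((n a:ℂ) * x) * Complex.I) := by
      rw [← Complex.exp_add]; congr 1; ring
    rw [hprod]
    push_cast
    rw [csin_exp, e1, e2]
    field_simp
  rw [intervalIntegral.integral_congr (g := fun x => Complex.exp ((m:ℂ) * x * Complex.I) * (RP n s t x : ℂ)
          + (s a : ℂ) / (2*Complex.I) *
            (Complex.exp ((↑(m + (n a:ℤ)):ℂ) * x * Complex.I) * (RP n s t x : ℂ)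
             - Complex.exp ((↑(m - (n a:ℤ)):ℂ) * x * Complex.I) * (RP n s t x : ℂ)))
        (fun x _ => hpt x)]
  rw [intervalIntegral.integral_add (intgQ n s t m)
        (((intgQ n s t (m + n a)).sub (intgQ n s t (m - n a))).const_mul _),
      intervalIntegral.integral_const_mul,
      intervalIntegral.integral_sub (intgQ n s t (m + n a)) (intgQ n s t (m - n a))]

lemma QQ_big (t : Finset ℕ) (m : ℤ) (hm : ((∑ k ∈ t, n k : ℕ) : ℤ) < |m|) :
    QQ n s t m = 0 := by
  induction t using Finset.induction_on generalizing m with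
  | empty =>
    rw [QQ_empty]
    have : m ≠ 0 := by
      simp only [Finset.sum_empty, Nat.cast_zero] at hm
      intro h; rw [h] at hm; simp at hm
    simp [this]
  | insert a t ha ih =>
    rw [QQ_insert n s t a ha]
    rw [Finset.sum_insert ha] at hm
    push_cast at hm
    have habs : ∀ d : ℤ, |m| - |d| ≤ |m + d| := by
      intro d
      have := abs_add_le (m + d) (-d)
      simp only [add_neg_cancel_right, abs_neg] at this
      linarith
    have hs0 : (0:ℤ) ≤ ((∑ k ∈ t, n k : ℕ) : ℤ) := by positivity
    have hna : |((n a : ℕ) : ℤ)| = ((n a : ℕ) : ℤ) := abs_of_nonneg (by positivity)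
    have h1 : QQ n s t m = 0 := ih m (by push_cast; linarith)
    have h2 : QQ n s t (m + n a) = 0 := by
      apply ih
      have := habs (n a)
      rw [hna] at this
      push_cast
      linarith
    have h3 : QQ n s t (m - n a) = 0 := by
      apply ih
      have := habs (-(n a))
      rw [abs_neg, hna] at this
      rw [sub_eq_add_neg]
      push_cast at this ⊢
      linarith
    rw [h1, h2, h3]
    simp

lemma QQ_zero (t : Finset ℕ)
    (hsep : ∀ j : ℕ, (∑ k ∈ t.filter (· < j), n k) < n j) :
    QQ n s t 0 = (2*Real.pi : ℂ) := by
  induction t using Finset.induction_on_max with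
  | empty => rw [QQ_empty]; simp
  | insert a u hu ih =>
    have hau : a ∉ u := fun h => lt_irrefl a (hu a h)
    have hfil : (insert a u).filter (· < a) = u := by
      ext k
      simp only [Finset.mem_filter, Finset.mem_insert]
      constructor
      · rintro ⟨h | h, hk⟩
        · omega
        · exact h
      · intro hk
        exact ⟨Or.inr hk, hu k hk⟩
    have hSa : (∑ k ∈ u, n k) < n a := by
      have := hsep a; rwa [hfil] at this
    have hsepu : ∀ j : ℕ, (∑ k ∈ u.filter (· < j), n k) < n j := by
      intro j
      refine lt_of_le_of_lt ?_ (hsep j)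
      apply Finset.sum_le_sum_of_subset
      intro k hk
      simp only [Finset.mem_filter, Finset.mem_insert] at hk ⊢
      exact ⟨Or.inr hk.1, hk.2⟩
    rw [QQ_insert n s u a hau, ih hsepu]
    have h1 : QQ n s u (0 + n a) = 0 := by
      apply QQ_big
      rw [zero_add, abs_of_nonneg (by positivity)]
      exact_mod_cast hSa
    have h2 : QQ n s u (0 - n a) = 0 := by
      apply QQ_big
      rw [zero_sub, abs_neg, abs_of_nonneg (by positivity)]
      exact_mod_cast hSa
    rw [h1, h2]
    ring

lemma QQ_freq (t : Finset ℕ) (j : ℕ)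
    (hsep : ∀ i : ℕ, (∑ k ∈ t.filter (· < i), n k) < n i)
    (hj : ∀ M ∈ t, j < M → n j + (∑ k ∈ t.filter (· < M), n k) < n M) :
    QQ n s t (n j) = if j ∈ t then (Real.pi : ℂ) * Complex.I * s j else 0 := by
  induction t using Finset.induction_on_max with
  | empty =>
    rw [QQ_empty]
    have hnj : 0 < n j := by simpa using hsep j
    have : ((n j : ℤ)) ≠ 0 := by exact_mod_cast hnj.ne'
    simp [this, hnj.ne']
  | insert a u hu ih =>
    have hau : a ∉ u := fun h => lt_irrefl a (hu a h)
    have hfil : (insert a u).filter (· < a) = u := by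
      ext k
      simp only [Finset.mem_filter, Finset.mem_insert]
      constructor
      · rintro ⟨h | h, hk⟩
        · omega
        · exact h
      · intro hk
        exact ⟨Or.inr hk, hu k hk⟩
    have hSa : (∑ k ∈ u, n k) < n a := by
      have := hsep a; rwa [hfil] at this
    have hsepu : ∀ i : ℕ, (∑ k ∈ u.filter (· < i), n k) < n i := by
      intro i
      refine lt_of_le_of_lt ?_ (hsep i)
      apply Finset.sum_le_sum_of_subset
      intro k hk
      simp only [Finset.mem_filter, Finset.mem_insert] at hk ⊢
      exact ⟨Or.inr hk.1, hk.2⟩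
    rcases lt_trichotomy j a with hja | rfl | haj
    · -- j < a
      have hne : j ≠ a := ne_of_lt hja
      have hja2 : n j + ∑ k ∈ u, n k < n a := by
        have := hj a (Finset.mem_insert_self a u) hja
        rwa [hfil] at this
      rw [QQ_insert n s u a hau]
      have h2 : QQ n s u ((n j : ℤ) + n a) = 0 := by
        apply QQ_big
        rw [abs_of_nonneg (by positivity)]
        omega
      have h3 : QQ n s u ((n j : ℤ) - n a) = 0 := by
        apply QQ_big
        rw [abs_of_nonpos (by omega)]
        omega
      have hju : ∀ M ∈ u, j < M → n j + (∑ k ∈ u.filter (· < M), n k) < n M := by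
        intro M hM hjM
        refine lt_of_le_of_lt ?_ (hj M (Finset.mem_insert_of_mem hM) hjM)
        have : u.filter (· < M) ⊆ (insert a u).filter (· < M) := by
          apply Finset.filter_subset_filter
          exact Finset.subset_insert a u
        have hsum := Finset.sum_le_sum_of_subset (f := n) this
        omega
      rw [h2, h3, ih hsepu hju]
      simp [Finset.mem_insert, hne]
    · -- j = a
      rw [QQ_insert n s u j hau]
      have h1 : QQ n s u (n j) = 0 := by
        apply QQ_big
        rw [abs_of_nonneg (by positivity)]
        exact_mod_cast hSa
      have h2 : QQ n s u ((n j : ℤ) + n j) = 0 := by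
        apply QQ_big
        rw [abs_of_nonneg (by positivity)]
        omega
      have h3 : QQ n s u ((n j : ℤ) - n j) = (2*Real.pi : ℂ) := by
        rw [sub_self]
        exact QQ_zero n s u hsepu
      rw [h1, h2, h3, if_pos (Finset.mem_insert_self j u)]
      rw [zero_add, div_mul_eq_mul_div, div_eq_iff two_I_ne]
      ring_nf
      rw [Complex.I_sq]
      ring
    · -- a < j
      have hnotin : j ∉ insert a u := by
        intro h
        rcases Finset.mem_insert.mp h with rfl | h
        · exact lt_irrefl j haj
        · exact lt_irrefl j (lt_trans (hu j h) haj)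
      rw [if_neg hnotin]
      apply QQ_big
      have hfil2 : (insert a u).filter (· < j) = insert a u := by
        apply Finset.filter_true_of_mem
        intro k hk
        rcases Finset.mem_insert.mp hk with rfl | h
        · exact haj
        · exact lt_trans (hu k h) haj
      have := hsep j
      rw [hfil2] at this
      rw [abs_of_nonneg (by positivity)]
      exact_mod_cast this

lemma interval_integral_conj (f : ℝ → ℂ) (a b : ℝ) :
    ∫ x in a..b, (starRingEnd ℂ) (f x) = (starRingEnd ℂ) (∫ x in a..b, f x) := by
  rw [intervalIntegral_eq_integral_uIoc, intervalIntegral_eq_integral_uIoc,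
    _root_.integral_conj]
  rcases le_or_gt a b with h | h
  · simp [h]
  · simp [not_le.mpr h, Complex.real_smul]

lemma QQ_neg (t : Finset ℕ) (m : ℤ) :
    QQ n s t (-m) = (starRingEnd ℂ) (QQ n s t m) := by
  unfold QQ
  rw [← interval_integral_conj]
  apply intervalIntegral.integral_congr
  intro x _
  simp only [map_mul, Complex.conj_ofReal, ← Complex.exp_conj]
  congr 2
  simp only [map_mul, Complex.conj_I, Complex.conj_ofReal, map_intCast]
  push_cast
  ring

lemma RP_nonneg (hs1 : ∀ k, |s k| ≤ 1) (t : Finset ℕ) (x : ℝ) : 0 ≤ RP n s t x := by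
  apply Finset.prod_nonneg
  intro k _
  have h1 : |s k * Real.sin (n k * x)| ≤ 1 := by
    rw [abs_mul]
    calc |s k| * |Real.sin (n k * x)| ≤ 1 * 1 :=
      mul_le_mul (hs1 k) (Real.abs_sin_le_one _) (abs_nonneg _) zero_le_one
    _ = 1 := by ring
  have := abs_le.mp h1
  linarith [this.1]

lemma integral_RP (t : Finset ℕ)
    (hsep : ∀ j : ℕ, (∑ k ∈ t.filter (· < j), n k) < n j) :
    ∫ x in (0:ℝ)..(2*Real.pi), RP n s t x = 2*Real.pi := by
  have h := QQ_zero n s t hsep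
  unfold QQ at h
  simp only [Int.cast_zero, zero_mul, Complex.exp_zero, one_mul] at h
  rw [intervalIntegral.integral_ofReal] at h
  exact_mod_cast h

lemma integral_sin_RP (t : Finset ℕ) (j : ℕ)
    (hsep : ∀ i : ℕ, (∑ k ∈ t.filter (· < i), n k) < n i)
    (hj : ∀ M ∈ t, j < M → n j + (∑ k ∈ t.filter (· < M), n k) < n M) :
    ∫ x in (0:ℝ)..(2*Real.pi), Real.sin ((n j : ℝ) * x) * RP n s t x
      = if j ∈ t then Real.pi * s j else 0 := by
  have hC : ((∫ x in (0:ℝ)..(2*Real.pi), Real.sin ((n j : ℝ) * x) * RP n s t x : ℝ) : ℂ)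
      = (QQ n s t (n j) - QQ n s t (-(n j : ℤ))) / (2*Complex.I) := by
    rw [← intervalIntegral.integral_ofReal]
    rw [eq_div_iff two_I_ne]
    unfold QQ
    rw [← intervalIntegral.integral_sub (intgQ n s t (n j)) (intgQ n s t (-(n j : ℤ))),
      ← intervalIntegral.integral_mul_const]
    apply intervalIntegral.integral_congr
    intro x _
    push_cast
    rw [csin_exp]
    have e2 : Complex.exp (-(n j : ℂ) * x * Complex.I) = Complex.exp (-((n j : ℂ) * x) * Complex.I) := by
      congr 1; ring
    rw [e2]
    field_simp
  have hQ1 := QQ_freq n s t j hsep hj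
  have hQ2 : QQ n s t (-(n j : ℤ))
      = if j ∈ t then -((Real.pi : ℂ) * Complex.I * s j) else 0 := by
    rw [QQ_neg, hQ1]
    by_cases h : j ∈ t
    · simp only [if_pos h, map_mul, Complex.conj_I, Complex.conj_ofReal]
      ring
    · simp [h]
  rw [hQ1, hQ2] at hC
  by_cases h : j ∈ t
  · simp only [if_pos h] at hC ⊢
    have : ((Real.pi : ℂ) * Complex.I * s j - -((Real.pi : ℂ) * Complex.I * s j)) / (2*Complex.I)
        = ((Real.pi * s j : ℝ) : ℂ) := by
      rw [eq_comm, eq_div_iff two_I_ne]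
      push_cast
      ring
    rw [this] at hC
    exact_mod_cast hC
  · simp only [if_neg h] at hC ⊢
    rw [sub_self, zero_div] at hC
    exact_mod_cast hC

lemma key_bound (N : ℕ) (c : ℕ → ℝ) (B : ℝ) (t : Finset ℕ) (ht : t ⊆ Finset.range N)
    (hsep : ∀ i : ℕ, (∑ k ∈ t.filter (· < i), n k) < n i)
    (hj : ∀ j : ℕ, ∀ M ∈ t, j < M → n j + (∑ k ∈ t.filter (· < M), n k) < n M)
    (hB : ∀ x : ℝ, |∑ k ∈ Finset.range N, c k * Real.sin ((n k : ℝ) * x)| ≤ B) :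
    ∑ k ∈ t, |c k| ≤ 2 * B := by
  classical
  set s : ℕ → ℝ := fun k => if c k < 0 then -1 else 1 with hsdef
  have hs1 : ∀ k, |s k| ≤ 1 := by
    intro k; rw [hsdef]; dsimp only; split <;> simp
  have hsc : ∀ k, c k * s k = |c k| := by
    intro k; rw [hsdef]; dsimp only; split
    · rename_i h; rw [abs_of_neg h]; ring
    · rename_i h; rw [abs_of_nonneg (not_lt.mp h)]; ring
  have hcont : ∀ k : ℕ, Continuous fun x : ℝ => c k * (Real.sin ((n k : ℝ) * x) * RP n s t x) := by
    intro k
    exact (continuous_const.mul (((Real.continuous_sin.comp (by fun_prop))).mul (contRP n s t)))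
  have hInt : (∫ x in (0:ℝ)..(2*Real.pi),
        (∑ k ∈ Finset.range N, c k * Real.sin ((n k : ℝ) * x)) * RP n s t x)
      = Real.pi * ∑ k ∈ t, |c k| := by
    have hpt : ∀ x : ℝ, (∑ k ∈ Finset.range N, c k * Real.sin ((n k : ℝ) * x)) * RP n s t x
        = ∑ k ∈ Finset.range N, c k * (Real.sin ((n k : ℝ) * x) * RP n s t x) := by
      intro x
      rw [Finset.sum_mul]
      apply Finset.sum_congr rfl
      intro k _
      ring
    rw [intervalIntegral.integral_congr (fun x _ => hpt x)]
    rw [intervalIntegral.integral_finset_sum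
      (fun k _ => ((hcont k).intervalIntegrable _ _))]
    have : ∀ k ∈ Finset.range N,
        (∫ x in (0:ℝ)..(2*Real.pi), c k * (Real.sin ((n k : ℝ) * x) * RP n s t x))
          = if k ∈ t then Real.pi * |c k| else 0 := by
      intro k _
      rw [intervalIntegral.integral_const_mul,
        integral_sin_RP n s t k hsep (hj k)]
      split
      · rw [← hsc k]; ring
      · ring
    rw [Finset.sum_congr rfl this, Finset.sum_ite_mem, Finset.inter_eq_right.mpr ht,
      Finset.mul_sum]
  have hf : Continuous fun x : ℝ => ∑ k ∈ Finset.range N, c k * Real.sin ((n k : ℝ) * x) := by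
    apply continuous_finset_sum
    intro k _
    fun_prop
  have hfRP : Continuous fun x : ℝ =>
      (∑ k ∈ Finset.range N, c k * Real.sin ((n k : ℝ) * x)) * RP n s t x :=
    hf.mul (contRP n s t)
  have h2pi : (0:ℝ) ≤ 2*Real.pi := by positivity
  have habs : |∫ x in (0:ℝ)..(2*Real.pi),
        (∑ k ∈ Finset.range N, c k * Real.sin ((n k : ℝ) * x)) * RP n s t x|
      ≤ 2 * Real.pi * B := by
    calc |∫ x in (0:ℝ)..(2*Real.pi),
          (∑ k ∈ Finset.range N, c k * Real.sin ((n k : ℝ) * x)) * RP n s t x|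
        ≤ ∫ x in (0:ℝ)..(2*Real.pi),
          |(∑ k ∈ Finset.range N, c k * Real.sin ((n k : ℝ) * x)) * RP n s t x| :=
          intervalIntegral.abs_integral_le_integral_abs h2pi
      _ ≤ ∫ x in (0:ℝ)..(2*Real.pi), B * RP n s t x := by
          apply intervalIntegral.integral_mono_on h2pi
            ((hfRP.abs).intervalIntegrable _ _)
            ((continuous_const.mul (contRP n s t)).intervalIntegrable _ _)
          intro x _
          rw [abs_mul, abs_of_nonneg (RP_nonneg n s hs1 t x)]
          exact mul_le_mul_of_nonneg_right (hB x) (RP_nonneg n s hs1 t x)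
      _ = B * (2*Real.pi) := by
          rw [intervalIntegral.integral_const_mul, integral_RP n s t hsep]
      _ = 2 * Real.pi * B := by ring
  rw [hInt] at habs
  have hsum0 : 0 ≤ ∑ k ∈ t, |c k| := Finset.sum_nonneg fun k _ => abs_nonneg _
  have hpi := Real.pi_pos
  rw [abs_of_nonneg (by positivity)] at habs
  nlinarith

end SidonAux

section NumericFacts

variable {lam : ℝ} (n : ℕ → ℕ)

lemma sidon_ndouble (hlam : 2 < lam) (hpos : ∀ k, 0 < n k)
    (hlac : ∀ k, lam * (n k : ℝ) ≤ (n (k + 1) : ℝ)) :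
    ∀ k, 2 * n k < n (k + 1) := by
  intro k
  have h1 : (2:ℝ) * n k < lam * n k :=
    mul_lt_mul_of_pos_right hlam (by exact_mod_cast hpos k)
  have h2 : (2 * n k : ℝ) < n (k+1) := lt_of_lt_of_le h1 (hlac k)
  exact_mod_cast h2

lemma sidon_sum_lt (hlam : 2 < lam) (hpos : ∀ k, 0 < n k)
    (hlac : ∀ k, lam * (n k : ℝ) ≤ (n (k + 1) : ℝ)) :
    ∀ j, ∑ k ∈ Finset.range j, n k < n j := by
  intro j
  induction j with
  | zero => simpa using hpos 0
  | succ j ih =>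
    rw [Finset.sum_range_succ]
    have := sidon_ndouble n hlam hpos hlac j
    omega

lemma sidon_mono (hlam : 2 < lam) (hpos : ∀ k, 0 < n k)
    (hlac : ∀ k, lam * (n k : ℝ) ≤ (n (k + 1) : ℝ)) :
    Monotone n := by
  apply monotone_nat_of_le_succ
  intro k
  have := sidon_ndouble n hlam hpos hlac k
  have := hpos k
  omega

end NumericFacts



/-- Sidon's theorem for lacunary series (finite form): for every `λ > 2` there is a
constant `C(λ) > 0` such that for any finite lacunary sequence of positive integers with
`n_{k+1} ≥ λ n_k` and any real coefficients `c_k`,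
`sup_x |Σ_{k<N} c_k sin(n_k x)| ≥ C(λ) Σ_{k<N} |c_k|`. -/
theorem stmt_16 (lam : ℝ) (hlam : 2 < lam) :
    ∃ C : ℝ, 0 < C ∧ ∀ (N : ℕ) (n : ℕ → ℕ) (c : ℕ → ℝ),
      (∀ k, 0 < n k) → (∀ k, lam * (n k : ℝ) ≤ (n (k + 1) : ℝ)) →
      ∀ B : ℝ, (∀ x : ℝ, |∑ k ∈ Finset.range N, c k * Real.sin ((n k : ℝ) * x)| ≤ B) →
        C * ∑ k ∈ Finset.range N, |c k| ≤ B := by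
  classical
  refine ⟨1/4, by norm_num, ?_⟩
  intro N n c hpos hlac B hB
  have hsep : ∀ t : Finset ℕ, ∀ i : ℕ, (∑ k ∈ t.filter (· < i), n k) < n i := by
    intro t i
    refine lt_of_le_of_lt (Finset.sum_le_sum_of_subset ?_) (sidon_sum_lt n hlam hpos hlac i)
    intro k hk
    simp only [Finset.mem_filter] at hk
    exact Finset.mem_range.mpr hk.2
  have hparity : ∀ r : ℕ, ∀ j : ℕ, ∀ M ∈ (Finset.range N).filter (fun k => k % 2 = r), j < M →
      n j + ∑ k ∈ ((Finset.range N).filter (fun k => k % 2 = r)).filter (· < M), n k < n M := by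
    intro r j M hM hjM
    obtain ⟨m, rfl⟩ : ∃ m, M = m + 1 := ⟨M - 1, by omega⟩
    simp only [Finset.mem_filter] at hM
    have hsub : (((Finset.range N).filter (fun k => k % 2 = r)).filter (· < m+1))
        ⊆ Finset.range m := by
      intro k hk
      simp only [Finset.mem_filter, Finset.mem_range] at hk ⊢
      omega
    have h1 := Finset.sum_le_sum_of_subset (f := n) hsub
    have h2 := sidon_sum_lt n hlam hpos hlac m
    have h3 := sidon_ndouble n hlam hpos hlac m
    have h4 : n j ≤ n m := sidon_mono n hlam hpos hlac (by omega : j ≤ m)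
    omega
  have hkey : ∀ r : ℕ, ∑ k ∈ (Finset.range N).filter (fun k => k % 2 = r), |c k| ≤ 2 * B :=
    fun r => SidonAux.key_bound n N c B _ (Finset.filter_subset _ _) (hsep _) (hparity r) hB
  have h0 := hkey 0
  have h1 := hkey 1
  have hsplit : (∑ k ∈ Finset.range N, |c k|)
      = (∑ k ∈ (Finset.range N).filter (fun k => k % 2 = 0), |c k|)
        + ∑ k ∈ (Finset.range N).filter (fun k => k % 2 = 1), |c k| := by
    rw [← Finset.sum_filter_add_sum_filter_not (Finset.range N) (fun k => k % 2 = 0)]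
    congr 1
    apply Finset.sum_congr _ (fun _ _ => rfl)
    apply Finset.filter_congr
    intro k _
    simp [Nat.mod_two_ne_zero]
  linarith
end
end
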